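/- arXiv:2001.07468 — 2 statements merged into one kernel-verified Lean document; each statement's English description precedes it below -/
import Mathlib

section
/- Let r be the Rudin–Shapiro sequence and let Q^b be defined from the blocks r_{2^n}···r_{2^{n+1}−1}. Then for all j ≥ 2: (1) Q^b_{2^{2j}−2}(x) ≡ 1 + 2(1 + x)·S_{2j-2}(x) (mod 4); (2) Q^b_{2^{2j+1}−2}(x) ≡ 1 + 2x + 2(1 + x)·S_{2j-1}(x) (mod 4); (3) Q^b_{2^{2j}−1}(x) ≡ 1 + 2x² + 2x⁵ + (3 + 2x³)·S_{2j-2}(x) + (2 + 2x)·T_{2j-2}(x) + 2x·S^e_{j-1}(x) + x^{2^{2j-1}} (mod 4); (4) Q^b_{2^{2j+1}−1}(x) ≡ 1 + 2x² + 2x⁵ + (3 + 2x³)·S_{2j-1}(x) + (2 + 2x)·T_{2j-1}(x) + 2x·S^o_{j-1}(x) + x^{2^{2j}} (mod 4). -/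
open Polynomial

/-- The elementary matrix `[[0, c_i x],[1,1]]` used to build the convergents of a
Stieltjes continued fraction. -/
noncomputable def step (c : ℕ → ℤ) (i : ℕ) : Matrix (Fin 2) (Fin 2) (Polynomial ℤ) :=
  !![0, Polynomial.C (c i) * Polynomial.X; 1, 1]

/-- `S_n(x) = Σ_{i=0}^{n} x^{2^i}`. -/
noncomputable def Spoly (n : ℕ) : Polynomial ℤ :=
  ∑ i ∈ Finset.range (n + 1), Polynomial.X ^ (2 ^ i)

/-- `S^e_n(x) = Σ_{i=0}^{n} x^{2^{2i}}`. -/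
noncomputable def Sepoly (n : ℕ) : Polynomial ℤ :=
  ∑ i ∈ Finset.range (n + 1), Polynomial.X ^ (2 ^ (2 * i))

/-- `S^o_n(x) = Σ_{i=0}^{n} x^{2^{2i+1}}`. -/
noncomputable def Sopoly (n : ℕ) : Polynomial ℤ :=
  ∑ i ∈ Finset.range (n + 1), Polynomial.X ^ (2 ^ (2 * i + 1))

/-- `T_n(x) = Σ_{i=3}^{n} Σ_{k=2}^{i-1} x^{2^i + 2^k}` (so `T_2 = 0`). -/
noncomputable def Tpoly (n : ℕ) : Polynomial ℤ :=
  ∑ i ∈ Finset.Icc 3 n, ∑ k ∈ Finset.Icc 2 (i - 1), Polynomial.X ^ (2 ^ i + 2 ^ k)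


noncomputable section StmtAux

abbrev R4 := Polynomial (ZMod 4)

noncomputable def sP (m : ℕ) : R4 := ∑ i ∈ Finset.range (m + 1), X ^ (2 ^ i)
noncomputable def cP (m : ℕ) : R4 := ∑ k ∈ Finset.Icc 2 m, X ^ (2 ^ k)
noncomputable def tP (m : ℕ) : R4 :=
  ∑ i ∈ Finset.Icc 3 m, ∑ k ∈ Finset.Icc 2 (i - 1), X ^ (2 ^ i + 2 ^ k)
noncomputable def uP (n : ℕ) : R4 :=
  ∑ e ∈ (Finset.range (n - 1)).filter (fun e => e % 2 = n % 2), X ^ (2 ^ e)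

lemma sP_succ (m : ℕ) : sP (m + 1) = sP m + X ^ (2 ^ (m + 1)) :=
  Finset.sum_range_succ _ _

lemma cP_succ (m : ℕ) (hm : 1 ≤ m) : cP (m + 1) = cP m + X ^ (2 ^ (m + 1)) := by
  unfold cP
  rw [Finset.sum_Icc_succ_top (by omega)]

lemma sP_one : sP 1 = X + X ^ 2 := by
  simp [sP, Finset.sum_range_succ]

lemma cP_eq (m : ℕ) (hm : 1 ≤ m) : sP m = X + X ^ 2 + cP m := by
  induction m, hm using Nat.le_induction with
  | base => simp [sP_one, cP, show Finset.Icc 2 1 = ∅ from rfl]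
  | succ n hn ih => rw [sP_succ, cP_succ n hn, ih]; ring

lemma tP_succ (m : ℕ) : tP (m + 1) = tP m + X ^ (2 ^ (m + 1)) * cP m := by
  match m with
  | 0 => simp [tP, cP, show Finset.Icc 3 1 = ∅ from rfl, show Finset.Icc 2 0 = ∅ from rfl]
  | 1 => simp [tP, cP, show Finset.Icc 3 2 = ∅ from rfl, show Finset.Icc 2 1 = ∅ from rfl]
  | (k + 2) =>
    unfold tP
    rw [Finset.sum_Icc_succ_top (by omega)]
    congr 1
    rw [show k + 2 + 1 - 1 = k + 2 from rfl]
    rw [cP, Finset.mul_sum]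
    exact Finset.sum_congr rfl fun i _ => by rw [pow_add]

lemma tP_one : tP 1 = 0 := by simp [tP, show Finset.Icc 3 1 = ∅ from rfl]

lemma sq_sP (m : ℕ) (hm : 1 ≤ m) :
    sP m ^ 2 = sP m + X ^ (2 ^ (m + 1)) - X + 2 * X * sP m + 2 * X ^ 2 * sP m
      - 2 * X ^ 2 - 2 * X ^ 3 - 2 * X ^ 4 + 2 * tP m := by
  induction m, hm using Nat.le_induction with
  | base => rw [sP_one, tP_one]; ring
  | succ n hn ih =>
    have hA2 : (X : R4) ^ (2 ^ (n + 1)) * X ^ (2 ^ (n + 1)) = X ^ (2 ^ (n + 2)) := by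
      rw [← pow_add]; congr 1; ring
    rw [sP_succ, tP_succ]
    linear_combination ih + (2 * (X:R4) ^ (2 ^ (n + 1))) * cP_eq n hn + hA2

lemma uP_two : uP 2 = X := by
  rw [uP, show (Finset.range 1).filter (fun e => e % 2 = 2 % 2) = {0} from rfl]
  simp
lemma uP_three : uP 3 = X ^ 2 := by
  rw [uP, show (Finset.range 2).filter (fun e => e % 2 = 3 % 2) = {1} from rfl]
  simp

lemma uP_step (k : ℕ) : uP (k + 3) = uP (k + 1) + X ^ (2 ^ (k + 1)) := by
  unfold uP
  rw [show k + 3 - 1 = (k + 1) + 1 by omega, show k + 1 - 1 = k by omega]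
  rw [Finset.range_add_one, Finset.filter_insert, if_pos (by omega),
    Finset.sum_insert (by
      intro h
      have := Finset.mem_of_mem_filter _ h
      simp at this)]
  rw [Finset.range_add_one, Finset.filter_insert, if_neg (by omega)]
  have hfc : Finset.filter (fun e => e % 2 = (k + 3) % 2) (Finset.range k)
      = Finset.filter (fun e => e % 2 = (k + 1) % 2) (Finset.range k) :=
    Finset.filter_congr (fun e _ => by omega)
  rw [hfc]
  ring

lemma uP_add_uP (n : ℕ) (hn : 2 ≤ n) : uP (n + 1) + uP n = sP (n - 1) := by
  induction n, hn using Nat.le_induction with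
  | base => rw [uP_three, uP_two, sP_one]; ring
  | succ n hn ih =>
    have h1 : uP (n + 1 + 1) = uP n + X ^ (2 ^ n) := by
      have := uP_step (n - 1)
      rw [show n - 1 + 3 = n + 2 by omega, show n - 1 + 1 = n by omega] at this
      exact this
    have h2 : sP (n + 1 - 1) = sP (n - 1) + X ^ (2 ^ n) := by
      have := sP_succ (n - 1)
      rw [show n - 1 + 1 = n by omega] at this
      rw [show n + 1 - 1 = n by omega, this]
    linear_combination h1 - h2 + ih

end StmtAux
noncomputable section StmtAux2
open Polynomial

noncomputable def sg : R4 →+* R4 := Polynomial.eval₂RingHom Polynomial.C (-X)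

lemma sg_X : sg X = -X := eval₂_X _ _

lemma even_two_pow (k : ℕ) (hk : 1 ≤ k) : Even (2 ^ k) := by
  obtain ⟨j, rfl⟩ := Nat.exists_eq_add_of_le hk
  exact ⟨2 ^ j, by rw [pow_add, pow_one]; ring⟩

lemma sg_X_pow_even {k : ℕ} (hk : Even k) : sg (X ^ k) = X ^ k := by
  rw [map_pow, sg_X, Even.neg_pow hk]

lemma sg_sP (m : ℕ) : sg (sP m) = sP m - 2 * X := by
  unfold sP
  rw [map_sum, Finset.sum_range_succ', Finset.sum_range_succ']
  rw [show (2:ℕ) ^ 0 = 1 from rfl, pow_one, sg_X]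
  rw [Finset.sum_congr rfl
    (fun i (_ : i ∈ Finset.range m) => sg_X_pow_even (even_two_pow (i + 1) (by omega)))]
  ring

lemma sg_tP (m : ℕ) : sg (tP m) = tP m := by
  unfold tP
  rw [map_sum]
  refine Finset.sum_congr rfl (fun i hi => ?_)
  rw [map_sum]
  refine Finset.sum_congr rfl (fun k hk => ?_)
  have hi3 : 3 ≤ i := (Finset.mem_Icc.mp hi).1
  have hk2 : 2 ≤ k := (Finset.mem_Icc.mp hk).1
  rw [map_pow, sg_X, Even.neg_pow]
  exact (even_two_pow i (by omega)).add (even_two_pow k (by omega))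

lemma sg_uP_odd (n : ℕ) (h : n % 2 = 1) : sg (uP n) = uP n := by
  unfold uP
  rw [map_sum]
  refine Finset.sum_congr rfl (fun e he => ?_)
  have := (Finset.mem_filter.mp he).2
  exact sg_X_pow_even (even_two_pow e (by omega))

lemma sg_uP_even (n : ℕ) (h2 : 2 ≤ n) (h : n % 2 = 0) : sg (uP n) = uP n - 2 * X := by
  unfold uP
  have h0 : 0 ∈ (Finset.range (n - 1)).filter (fun e => e % 2 = n % 2) := by
    rw [Finset.mem_filter, Finset.mem_range]
    omega
  rw [← Finset.add_sum_erase _ _ h0, map_add, map_sum]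
  rw [show (2:ℕ) ^ 0 = 1 from rfl, pow_one, sg_X]
  rw [Finset.sum_congr rfl (fun e he => ?_)]
  · ring
  · have h1 := (Finset.mem_filter.mp (Finset.mem_of_mem_erase he)).2
    have h2 := Finset.ne_of_mem_erase he
    exact sg_X_pow_even (even_two_pow e (by omega))

/-- parity scalar -/
noncomputable def dd (n : ℕ) : R4 := if n % 2 = 1 then 1 else 0

noncomputable def Nform (n : ℕ) : Matrix (Fin 2) (Fin 2) R4 :=
  !![sP (n-2) + 2*X^2 + 2*X^5 + 2*X^3*sP (n-2) + (2+2*X)*tP (n-2) + 2*X*uP n + X^(2^(n-1)),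
     X + 2*X^3 + 2*X^4 + 2*X^5 + 2*X^3*sP (n-2) + 2*X*tP (n-2) + 2*X*uP n + 2*dd n*X^2;
     1 + (2+2*X)*sP (n-2) + 2*dd n*X,
     1 + 2*X^2 + 2*X^5 + 3*sP (n-2) + 2*X^3*sP (n-2) + (2+2*X)*tP (n-2) + 2*X*uP n + X^(2^(n-1))]

noncomputable def Gform (n : ℕ) : Matrix (Fin 2) (Fin 2) R4 :=
  !![sP (n-2) + 2*X^2 + 2*X^5 + 2*X^3*sP (n-2) + (2+2*X)*tP (n-2) + 2*X*uP n + X^(2^(n-1))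
       + 2*X*sP (n-2),
     X + 2*X^3 + 2*X^4 + 2*X^5 + 2*X*sP (n-2) + 2*X^3*sP (n-2) + 2*X*tP (n-2) + 2*X*uP n
       + 2*(1 - dd n)*X^2;
     1 + (2+2*X)*sP (n-2) + 2*(1 - dd n)*X,
     1 + 2*X^2 + 2*X^5 + 3*sP (n-2) + 2*X^3*sP (n-2) + (2+2*X)*tP (n-2) + 2*X*uP n + X^(2^(n-1))
       + 2*X*sP (n-2)]

end StmtAux2
noncomputable section StmtAux3
open Polynomial

lemma h4R4 : (4 : R4) = 0 := by
  have h : ((4 : ℕ) : ZMod 4) = 0 := rfl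
  rw [show (4 : R4) = ((4 : ℕ) : R4) by norm_num, ← Polynomial.C_eq_natCast, h, map_zero]

lemma mapMatrix_fin_two {α β : Type*} [NonAssocSemiring α] [NonAssocSemiring β]
    (f : α →+* β) (a b c d : α) :
    f.mapMatrix !![a, b; c, d] = !![f a, f b; f c, f d] := by
  refine Matrix.ext fun i j => ?_
  fin_cases i <;> fin_cases j <;>
    simp [RingHom.mapMatrix_apply, Matrix.map_apply]

lemma step_G (n : ℕ) (hn : 3 ≤ n) : Gform (n+1) = Gform n * Nform n := by
  have h4 : (4 : R4) = 0 := h4R4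
  have e1 : n - 2 + 1 = n - 1 := by omega
  have hR1 : sP (n-2) ^ 2 = sP (n-2) + X ^ (2 ^ (n-1)) - X + 2 * X * sP (n-2)
      + 2 * X ^ 2 * sP (n-2) - 2 * X ^ 2 - 2 * X ^ 3 - 2 * X ^ 4 + 2 * tP (n-2) := by
    have := sq_sP (n-2) (by omega); rwa [e1] at this
  have hR2 : sP (n-2) = X + X ^ 2 + cP (n-2) := cP_eq (n-2) (by omega)
  have hR3 : (X : R4) ^ (2 ^ (n-1)) * X ^ (2 ^ (n-1)) = X ^ (2 ^ n) := by
    rw [← pow_add]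
    congr 1
    have h : n - 1 + 1 = n := by omega
    calc 2 ^ (n-1) + 2 ^ (n-1) = 2 ^ (n-1) * 2 := by ring
    _ = 2 ^ n := by rw [← pow_succ, h]
  have hs' : sP (n-1) = sP (n-2) + X ^ (2 ^ (n-1)) := by
    have := sP_succ (n-2); rwa [e1] at this
  have ht' : tP (n-1) = tP (n-2) + X ^ (2 ^ (n-1)) * cP (n-2) := by
    have := tP_succ (n-2); rwa [e1] at this
  have hu' : uP (n+1) = sP (n-2) + X ^ (2 ^ (n-1)) - uP n := by
    have h := uP_add_uP n (by omega)
    rw [hs'] at h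
    linear_combination h
  have hσA : sg ((X : R4) ^ (2 ^ (n-1))) = X ^ (2 ^ (n-1)) :=
    sg_X_pow_even (even_two_pow (n-1) (by omega))
  have e2 : n + 1 - 2 = n - 1 := by omega
  have e3 : n + 1 - 1 = n := by omega
  rcases Nat.even_or_odd n with he | ho
  · -- n even
    have hn2 : n % 2 = 0 := Nat.even_iff.mp he
    have hd : dd n = 0 := by unfold dd; rw [if_neg (by omega)]
    have hd1 : dd (n+1) = 1 := by unfold dd; rw [if_pos (by omega)]
    have hσU : sg (uP n) = uP n - 2 * X := sg_uP_even n (by omega) hn2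
    simp only [Gform, Nform, Matrix.mul_fin_two]
    rw [e2, e3, hs', ht', hu', hd, hd1]
    refine Matrix.ext fun i j => ?_
    fin_cases i <;> fin_cases j <;>
      simp only [Matrix.cons_val', Matrix.cons_val_zero, Matrix.cons_val_one, Matrix.head_cons,
        Matrix.empty_val', Matrix.cons_val_fin_one, Matrix.head_fin_const, Matrix.of_apply,
        Fin.zero_eta, Fin.mk_one, Fin.isValue]
    · linear_combination ((-1) + (-6)*X + (-4)*X^2 + (-8)*X^3 + (-8)*X^4 + (-4)*X^6) * hR1 + ((-2)*(X^(2^(n-1))) + (-2)*(X^(2^(n-1)))*X + (-4)*(X^(2^(n-1)))*X^3) * hR2 + ((-1)) * hR3 + (2*X^2 + 4*X^3 + 6*X^4 + 11*X^5 + 10*X^6 + 7*X^7 + 6*X^8 + 2*X^9 + X^10 + (-1)*(X^(2^(n-1)))*X + (-3)*(X^(2^(n-1)))*X^2 + (-2)*(X^(2^(n-1)))*X^3 + (-3)*(X^(2^(n-1)))*X^4 + (-2)*(X^(2^(n-1)))*X^5 + (-1)*(X^(2^(n-1)))*X^6 + (-1)*(X^(2^(n-1)))*(cP (n-2))*X^3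 + (-1)*(uP n)*X + (-2)*(uP n)*X^3 + (-2)*(uP n)*X^6 + (-1)*(uP n)*(X^(2^(n-1)))*X + (-1)*(uP n)^2*X^2 + (-3)*(tP (n-2))*X + (-4)*(tP (n-2))*X^2 + (-6)*(tP (n-2))*X^3 + (-4)*(tP (n-2))*X^4 + (-2)*(tP (n-2))*X^5 + (-4)*(tP (n-2))*X^6 + (-1)*(tP (n-2))*(X^(2^(n-1))) + (-1)*(tP (n-2))*(X^(2^(n-1)))*X + (-2)*(tP (n-2))*(uP n)*X + (-2)*(tP (n-2))*(uP n)*X^2 + (-1)*(tP (n-2))^2 + (-2)*(tP (n-2))^2*X + (-1)*(tP (n-2))^2*X^2 + (-2)*(sP (n-2))*X + (-7)*(sP (n-2))*X^2 + (-10)*(sP (n-2))*X^3 + (-10)*(sP (n-2))*X^4 + (-13)*(sP (n-2))*X^5 + (-7)*(sP (n-2))*X^6 + (-2)*(sP (n-2))*X^7 + (-4)*(sP (n-2))*X^8 + (-2)*(sP (n-2))*(uP n)*X + (-2)*(sP (n-2))*(uP n)*X^2 + (-2)*(sP (n-2))*(uP n)*X^4 + (-1)*(sP (n-2))*(tP (n-2))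 + (-3)*(sP (n-2))*(tP (n-2))*X + (-2)*(sP (n-2))*(tP (n-2))*X^2 + (-2)*(sP (n-2))*(tP (n-2))*X^3 + (-2)*(sP (n-2))*(tP (n-2))*X^4) * h4
    · linear_combination ((-6)*X + (-8)*X^3 + (-8)*X^4 + (-8)*X^6) * hR1 + ((-2)*(X^(2^(n-1)))*X + (-4)*(X^(2^(n-1)))*X^3) * hR2 + (0) * hR3 + (X^2 + 2*X^3 + 4*X^4 + 7*X^5 + 5*X^6 + 7*X^7 + 6*X^8 + 2*X^9 + 2*X^10 + (-1)*(X^(2^(n-1)))*X + (-1)*(X^(2^(n-1)))*X^2 + (-3)*(X^(2^(n-1)))*X^3 + (-4)*(X^(2^(n-1)))*X^4 + (-2)*(X^(2^(n-1)))*X^5 + (-2)*(X^(2^(n-1)))*X^6 + (-1)*(X^(2^(n-1)))*(cP (n-2))*X^3 + (-1)*(uP n)*X + (-1)*(uP n)*X^2 + (-3)*(uP n)*X^3 + (-2)*(uP n)*X^4 + (-2)*(uP n)*X^5 + (-4)*(uP n)*X^6 + (-1)*(uP n)*(X^(2^(n-1)))*X + (-2)*(uP n)^2*X^2 + (-4)*(tP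 (n-2))*X + (-2)*(tP (n-2))*X^2 + (-9)*(tP (n-2))*X^3 + (-8)*(tP (n-2))*X^4 + (-4)*(tP (n-2))*X^5 + (-8)*(tP (n-2))*X^6 + (-1)*(tP (n-2))*(X^(2^(n-1)))*X + (-2)*(tP (n-2))*(uP n)*X + (-4)*(tP (n-2))*(uP n)*X^2 + (-2)*(tP (n-2))^2*X + (-2)*(tP (n-2))^2*X^2 + (-2)*(sP (n-2))*X + (-5)*(sP (n-2))*X^2 + (-8)*(sP (n-2))*X^3 + (-10)*(sP (n-2))*X^4 + (-14)*(sP (n-2))*X^5 + (-10)*(sP (n-2))*X^6 + (-6)*(sP (n-2))*X^7 + (-8)*(sP (n-2))*X^8 + (-2)*(sP (n-2))*(uP n)*X + (-2)*(sP (n-2))*(uP n)*X^2 + (-4)*(sP (n-2))*(uP n)*X^4 + (-3)*(sP (n-2))*(tP (n-2))*X + (-2)*(sP (n-2))*(tP (n-2))*X^2 + (-2)*(sP (n-2))*(tP (n-2))*X^3 + (-4)*(sP (n-2))*(tP (n-2))*X^4) * h4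
    · linear_combination ((-8) + (-12)*X + (-4)*X^2 + (-8)*X^3 + (-8)*X^4) * hR1 + ((-4)*(X^(2^(n-1))) + (-4)*(X^(2^(n-1)))*X) * hR2 + (0) * hR3 + (2*X + 6*X^2 + 10*X^3 + 14*X^4 + 13*X^5 + 9*X^6 + 8*X^7 + 4*X^8 + (-2)*(X^(2^(n-1))) + (-4)*(X^(2^(n-1)))*X + (-3)*(X^(2^(n-1)))*X^2 + (-3)*(X^(2^(n-1)))*X^3 + (-2)*(X^(2^(n-1)))*X^4 + (-1)*(X^(2^(n-1)))*(cP (n-2)) + (-1)*(X^(2^(n-1)))*(cP (n-2))*X + (-1)*(uP n)*X + (-1)*(uP n)*X^2 + (-5)*(tP (n-2)) + (-8)*(tP (n-2))*X + (-3)*(tP (n-2))*X^2 + (-4)*(tP (n-2))*X^3 + (-4)*(tP (n-2))*X^4 + (-3)*(sP (n-2)) + (-8)*(sP (n-2))*X + (-13)*(sP (n-2))*X^2 + (-13)*(sP (n-2))*X^3 + (-9)*(sP (n-2))*X^4 + (-10)*(sP (n-2))*X^5 + (-6)*(sP (n-2))*X^6 + (-2)*(sP (n-2))*(uP n)*X +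 (-2)*(sP (n-2))*(uP n)*X^2 + (-2)*(sP (n-2))*(tP (n-2)) + (-4)*(sP (n-2))*(tP (n-2))*X + (-2)*(sP (n-2))*(tP (n-2))*X^2) * h4
    · linear_combination ((-9) + (-6)*X + (-16)*X^3 + (-8)*X^4 + (-4)*X^6) * hR1 + ((-6)*(X^(2^(n-1))) + (-2)*(X^(2^(n-1)))*X + (-4)*(X^(2^(n-1)))*X^3) * hR2 + ((-1)) * hR3 + (2*X + 5*X^2 + 7*X^3 + 9*X^4 + 11*X^5 + 11*X^6 + 11*X^7 + 6*X^8 + 2*X^9 + X^10 + (-2)*(X^(2^(n-1))) + (-2)*(X^(2^(n-1)))*X + (-3)*(X^(2^(n-1)))*X^2 + (-4)*(X^(2^(n-1)))*X^3 + (-3)*(X^(2^(n-1)))*X^4 + (-2)*(X^(2^(n-1)))*X^5 + (-1)*(X^(2^(n-1)))*X^6 + (-1)*(X^(2^(n-1)))*(cP (n-2)) + (-1)*(X^(2^(n-1)))*(cP (n-2))*X^3 + (-2)*(uP n)*X + (-1)*(uP n)*X^2 + (-2)*(uP n)*X^3 + (-2)*(uP n)*X^6 + (-1)*(uP n)*(X^(2^(n-1)))*X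 + (-1)*(uP n)^2*X^2 + (-5)*(tP (n-2)) + (-4)*(tP (n-2))*X + (-3)*(tP (n-2))*X^2 + (-10)*(tP (n-2))*X^3 + (-4)*(tP (n-2))*X^4 + (-2)*(tP (n-2))*X^5 + (-4)*(tP (n-2))*X^6 + (-1)*(tP (n-2))*(X^(2^(n-1))) + (-1)*(tP (n-2))*(X^(2^(n-1)))*X + (-2)*(tP (n-2))*(uP n)*X + (-2)*(tP (n-2))*(uP n)*X^2 + (-1)*(tP (n-2))^2 + (-2)*(tP (n-2))^2*X + (-1)*(tP (n-2))^2*X^2 + (-3)*(sP (n-2)) + (-6)*(sP (n-2))*X + (-11)*(sP (n-2))*X^2 + (-10)*(sP (n-2))*X^3 + (-13)*(sP (n-2))*X^4 + (-19)*(sP (n-2))*X^5 + (-7)*(sP (n-2))*X^6 + (-2)*(sP (n-2))*X^7 + (-4)*(sP (n-2))*X^8 + (-4)*(sP (n-2))*(uP n)*X + (-2)*(sP (n-2))*(uP n)*X^2 + (-2)*(sP (n-2))*(uP n)*X^4 + (-3)*(sP (n-2))*(tP (n-2)) + (-5)*(sP (n-2))*(tP (n-2))*X + (-2)*(sP (n-2))*(tP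 (n-2))*X^2 + (-2)*(sP (n-2))*(tP (n-2))*X^3 + (-2)*(sP (n-2))*(tP (n-2))*X^4) * h4
  · -- n odd
    have hn2 : n % 2 = 1 := Nat.odd_iff.mp ho
    have hd : dd n = 1 := by unfold dd; rw [if_pos (by omega)]
    have hd1 : dd (n+1) = 0 := by unfold dd; rw [if_neg (by omega)]
    have hσU : sg (uP n) = uP n := sg_uP_odd n hn2
    simp only [Gform, Nform, Matrix.mul_fin_two]
    rw [e2, e3, hs', ht', hu', hd, hd1]
    refine Matrix.ext fun i j => ?_
    fin_cases i <;> fin_cases j <;>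
      simp only [Matrix.cons_val', Matrix.cons_val_zero, Matrix.cons_val_one, Matrix.head_cons,
        Matrix.empty_val', Matrix.cons_val_fin_one, Matrix.head_fin_const, Matrix.of_apply,
        Fin.zero_eta, Fin.mk_one, Fin.isValue]
    · linear_combination ((-1) + (-6)*X + (-4)*X^2 + (-8)*X^3 + (-8)*X^4 + (-4)*X^6) * hR1 + ((-2)*(X^(2^(n-1))) + (-2)*(X^(2^(n-1)))*X + (-4)*(X^(2^(n-1)))*X^3) * hR2 + ((-1)) * hR3 + (2*X^2 + 4*X^3 + 5*X^4 + 10*X^5 + 9*X^6 + 7*X^7 + 6*X^8 + 2*X^9 + X^10 + (-1)*(X^(2^(n-1)))*X + (-3)*(X^(2^(n-1)))*X^2 + (-2)*(X^(2^(n-1)))*X^3 + (-3)*(X^(2^(n-1)))*X^4 + (-2)*(X^(2^(n-1)))*X^5 + (-1)*(X^(2^(n-1)))*X^6 + (-1)*(X^(2^(n-1)))*(cP (n-2))*X^3 + (-1)*(uP n)*X + (-1)*(uP n)*X^2 + (-2)*(uP n)*X^3 + (-2)*(uP n)*X^6 + (-1)*(uP n)*(X^(2^(n-1)))*X + (-1)*(uP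 n)^2*X^2 + (-3)*(tP (n-2))*X + (-5)*(tP (n-2))*X^2 + (-6)*(tP (n-2))*X^3 + (-4)*(tP (n-2))*X^4 + (-2)*(tP (n-2))*X^5 + (-4)*(tP (n-2))*X^6 + (-1)*(tP (n-2))*(X^(2^(n-1))) + (-1)*(tP (n-2))*(X^(2^(n-1)))*X + (-2)*(tP (n-2))*(uP n)*X + (-2)*(tP (n-2))*(uP n)*X^2 + (-1)*(tP (n-2))^2 + (-2)*(tP (n-2))^2*X + (-1)*(tP (n-2))^2*X^2 + (-2)*(sP (n-2))*X + (-7)*(sP (n-2))*X^2 + (-9)*(sP (n-2))*X^3 + (-11)*(sP (n-2))*X^4 + (-13)*(sP (n-2))*X^5 + (-7)*(sP (n-2))*X^6 + (-2)*(sP (n-2))*X^7 + (-4)*(sP (n-2))*X^8 + (-2)*(sP (n-2))*(uP n)*X + (-2)*(sP (n-2))*(uP n)*X^2 + (-2)*(sP (n-2))*(uP n)*X^4 + (-1)*(sP (n-2))*(tP (n-2)) + (-3)*(sP (n-2))*(tP (n-2))*X + (-2)*(sP (n-2))*(tP (n-2))*X^2 + (-2)*(sP (n-2))*(tP (n-2))*X^3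 + (-2)*(sP (n-2))*(tP (n-2))*X^4) * h4
    · linear_combination ((-6)*X + (-8)*X^3 + (-8)*X^4 + (-8)*X^6) * hR1 + ((-2)*(X^(2^(n-1)))*X + (-4)*(X^(2^(n-1)))*X^3) * hR2 + (0) * hR3 + (2*X^2 + 2*X^3 + 4*X^4 + 7*X^5 + 5*X^6 + 7*X^7 + 6*X^8 + 2*X^9 + 2*X^10 + (-1)*(X^(2^(n-1)))*X + (-1)*(X^(2^(n-1)))*X^2 + (-3)*(X^(2^(n-1)))*X^3 + (-4)*(X^(2^(n-1)))*X^4 + (-2)*(X^(2^(n-1)))*X^5 + (-2)*(X^(2^(n-1)))*X^6 + (-1)*(X^(2^(n-1)))*(cP (n-2))*X^3 + (-1)*(uP n)*X + (-1)*(uP n)*X^2 + (-3)*(uP n)*X^3 + (-2)*(uP n)*X^4 + (-2)*(uP n)*X^5 + (-4)*(uP n)*X^6 + (-1)*(uP n)*(X^(2^(n-1)))*X + (-2)*(uP n)^2*X^2 + (-4)*(tP (n-2))*X + (-2)*(tP (n-2))*X^2 + (-9)*(tP (n-2))*X^3 + (-8)*(tP (n-2))*X^4 + (-4)*(tP (n-2))*X^5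 + (-8)*(tP (n-2))*X^6 + (-1)*(tP (n-2))*(X^(2^(n-1)))*X + (-2)*(tP (n-2))*(uP n)*X + (-4)*(tP (n-2))*(uP n)*X^2 + (-2)*(tP (n-2))^2*X + (-2)*(tP (n-2))^2*X^2 + (-2)*(sP (n-2))*X + (-4)*(sP (n-2))*X^2 + (-9)*(sP (n-2))*X^3 + (-10)*(sP (n-2))*X^4 + (-14)*(sP (n-2))*X^5 + (-10)*(sP (n-2))*X^6 + (-6)*(sP (n-2))*X^7 + (-8)*(sP (n-2))*X^8 + (-2)*(sP (n-2))*(uP n)*X + (-2)*(sP (n-2))*(uP n)*X^2 + (-4)*(sP (n-2))*(uP n)*X^4 + (-3)*(sP (n-2))*(tP (n-2))*X + (-2)*(sP (n-2))*(tP (n-2))*X^2 + (-2)*(sP (n-2))*(tP (n-2))*X^3 + (-4)*(sP (n-2))*(tP (n-2))*X^4) * h4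
    · linear_combination ((-8) + (-12)*X + (-4)*X^2 + (-8)*X^3 + (-8)*X^4) * hR1 + ((-4)*(X^(2^(n-1))) + (-4)*(X^(2^(n-1)))*X) * hR2 + (0) * hR3 + (2*X + 6*X^2 + 10*X^3 + 14*X^4 + 13*X^5 + 9*X^6 + 8*X^7 + 4*X^8 + (-2)*(X^(2^(n-1))) + (-4)*(X^(2^(n-1)))*X + (-3)*(X^(2^(n-1)))*X^2 + (-3)*(X^(2^(n-1)))*X^3 + (-2)*(X^(2^(n-1)))*X^4 + (-1)*(X^(2^(n-1)))*(cP (n-2)) + (-1)*(X^(2^(n-1)))*(cP (n-2))*X + (-1)*(uP n)*X + (-1)*(uP n)*X^2 + (-5)*(tP (n-2)) + (-8)*(tP (n-2))*X + (-3)*(tP (n-2))*X^2 + (-4)*(tP (n-2))*X^3 + (-4)*(tP (n-2))*X^4 + (-3)*(sP (n-2)) + (-9)*(sP (n-2))*X + (-14)*(sP (n-2))*X^2 + (-13)*(sP (n-2))*X^3 + (-9)*(sP (n-2))*X^4 + (-10)*(sP (n-2))*X^5 + (-6)*(sP (n-2))*X^6 + (-2)*(sP (n-2))*(uP n)*X +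 (-2)*(sP (n-2))*(uP n)*X^2 + (-2)*(sP (n-2))*(tP (n-2)) + (-4)*(sP (n-2))*(tP (n-2))*X + (-2)*(sP (n-2))*(tP (n-2))*X^2) * h4
    · linear_combination ((-9) + (-6)*X + (-16)*X^3 + (-8)*X^4 + (-4)*X^6) * hR1 + ((-6)*(X^(2^(n-1))) + (-2)*(X^(2^(n-1)))*X + (-4)*(X^(2^(n-1)))*X^3) * hR2 + ((-1)) * hR3 + (2*X + 5*X^2 + 7*X^3 + 10*X^4 + 12*X^5 + 12*X^6 + 11*X^7 + 6*X^8 + 2*X^9 + X^10 + (-2)*(X^(2^(n-1))) + (-2)*(X^(2^(n-1)))*X + (-3)*(X^(2^(n-1)))*X^2 + (-4)*(X^(2^(n-1)))*X^3 + (-3)*(X^(2^(n-1)))*X^4 + (-2)*(X^(2^(n-1)))*X^5 + (-1)*(X^(2^(n-1)))*X^6 + (-1)*(X^(2^(n-1)))*(cP (n-2)) + (-1)*(X^(2^(n-1)))*(cP (n-2))*X^3 + (-2)*(uP n)*X + (-2)*(uP n)*X^3 + (-2)*(uP n)*X^6 + (-1)*(uP n)*(X^(2^(n-1)))*X + (-1)*(uP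 n)^2*X^2 + (-5)*(tP (n-2)) + (-4)*(tP (n-2))*X + (-2)*(tP (n-2))*X^2 + (-10)*(tP (n-2))*X^3 + (-4)*(tP (n-2))*X^4 + (-2)*(tP (n-2))*X^5 + (-4)*(tP (n-2))*X^6 + (-1)*(tP (n-2))*(X^(2^(n-1))) + (-1)*(tP (n-2))*(X^(2^(n-1)))*X + (-2)*(tP (n-2))*(uP n)*X + (-2)*(tP (n-2))*(uP n)*X^2 + (-1)*(tP (n-2))^2 + (-2)*(tP (n-2))^2*X + (-1)*(tP (n-2))^2*X^2 + (-3)*(sP (n-2)) + (-6)*(sP (n-2))*X + (-12)*(sP (n-2))*X^2 + (-11)*(sP (n-2))*X^3 + (-12)*(sP (n-2))*X^4 + (-19)*(sP (n-2))*X^5 + (-7)*(sP (n-2))*X^6 + (-2)*(sP (n-2))*X^7 + (-4)*(sP (n-2))*X^8 + (-4)*(sP (n-2))*(uP n)*X + (-2)*(sP (n-2))*(uP n)*X^2 + (-2)*(sP (n-2))*(uP n)*X^4 + (-3)*(sP (n-2))*(tP (n-2)) + (-5)*(sP (n-2))*(tP (n-2))*X + (-2)*(sP (n-2))*(tP (n-2))*X^2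 + (-2)*(sP (n-2))*(tP (n-2))*X^3 + (-2)*(sP (n-2))*(tP (n-2))*X^4) * h4

lemma step_N (n : ℕ) (hn : 3 ≤ n) :
    Nform (n+1) = Gform n * (RingHom.mapMatrix sg) (Nform n) := by
  have h4 : (4 : R4) = 0 := h4R4
  have e1 : n - 2 + 1 = n - 1 := by omega
  have hR1 : sP (n-2) ^ 2 = sP (n-2) + X ^ (2 ^ (n-1)) - X + 2 * X * sP (n-2)
      + 2 * X ^ 2 * sP (n-2) - 2 * X ^ 2 - 2 * X ^ 3 - 2 * X ^ 4 + 2 * tP (n-2) := by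
    have := sq_sP (n-2) (by omega); rwa [e1] at this
  have hR2 : sP (n-2) = X + X ^ 2 + cP (n-2) := cP_eq (n-2) (by omega)
  have hR3 : (X : R4) ^ (2 ^ (n-1)) * X ^ (2 ^ (n-1)) = X ^ (2 ^ n) := by
    rw [← pow_add]
    congr 1
    have h : n - 1 + 1 = n := by omega
    calc 2 ^ (n-1) + 2 ^ (n-1) = 2 ^ (n-1) * 2 := by ring
    _ = 2 ^ n := by rw [← pow_succ, h]
  have hs' : sP (n-1) = sP (n-2) + X ^ (2 ^ (n-1)) := by
    have := sP_succ (n-2); rwa [e1] at this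
  have ht' : tP (n-1) = tP (n-2) + X ^ (2 ^ (n-1)) * cP (n-2) := by
    have := tP_succ (n-2); rwa [e1] at this
  have hu' : uP (n+1) = sP (n-2) + X ^ (2 ^ (n-1)) - uP n := by
    have h := uP_add_uP n (by omega)
    rw [hs'] at h
    linear_combination h
  have hσA : sg ((X : R4) ^ (2 ^ (n-1))) = X ^ (2 ^ (n-1)) :=
    sg_X_pow_even (even_two_pow (n-1) (by omega))
  have e2 : n + 1 - 2 = n - 1 := by omega
  have e3 : n + 1 - 1 = n := by omega
  rcases Nat.even_or_odd n with he | ho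
  · -- n even
    have hn2 : n % 2 = 0 := Nat.even_iff.mp he
    have hd : dd n = 0 := by unfold dd; rw [if_neg (by omega)]
    have hd1 : dd (n+1) = 1 := by unfold dd; rw [if_pos (by omega)]
    have hσU : sg (uP n) = uP n - 2 * X := sg_uP_even n (by omega) hn2
    simp only [Gform, Nform, mapMatrix_fin_two, Matrix.mul_fin_two]
    rw [e2, e3, hs', ht', hu', hd, hd1]
    simp only [map_add, map_mul, map_pow, map_one, map_ofNat, map_zero, sg_X, sg_sP, sg_tP,
      hσU, hσA]
    refine Matrix.ext fun i j => ?_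
    fin_cases i <;> fin_cases j <;>
      simp only [Matrix.cons_val', Matrix.cons_val_zero, Matrix.cons_val_one, Matrix.head_cons,
        Matrix.empty_val', Matrix.cons_val_fin_one, Matrix.head_fin_const, Matrix.of_apply,
        Fin.zero_eta, Fin.mk_one, Fin.isValue]
    · linear_combination ((-1) + (-6)*X + 4*X^2 + (-4)*X^3 + 8*X^4 + 4*X^6) * hR1 + ((-2)*(X^(2^(n-1))) + (-2)*(X^(2^(n-1)))*X) * hR2 + ((-1)) * hR3 + (3*X^2 + 4*X^3 + (-1)*X^4 + X^5 + (-5)*X^6 + (-7)*X^7 + (-6)*X^8 + (-4)*X^9 + (-1)*X^10 + (-1)*(X^(2^(n-1)))*X + (-2)*(X^(2^(n-1)))*X^2 + (-1)*(X^(2^(n-1)))*X^3 + (X^(2^(n-1)))*X^4 + (X^(2^(n-1)))*X^6 + (-1)*(uP n)*X + 3*(uP n)*X^2 + (-4)*(uP n)*X^3 + (-2)*(uP n)*X^5 + 2*(uP n)*X^6 + (uP n)^2*X^2 + (-2)*(tP (n-2))*X + (tP (n-2))*X^2 + (-6)*(tP (n-2))*X^3 + 2*(tP (n-2))*X^4 +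 (-2)*(tP (n-2))*X^5 + 4*(tP (n-2))*X^6 + (-1)*(tP (n-2))*(X^(2^(n-1))) + 2*(tP (n-2))*(uP n)*X^2 + (-1)*(tP (n-2))^2 + (tP (n-2))^2*X^2 + (-2)*(sP (n-2))*X + (-2)*(sP (n-2))*X^2 + (-7)*(sP (n-2))*X^3 + 4*(sP (n-2))*X^4 + (-4)*(sP (n-2))*X^5 + 7*(sP (n-2))*X^6 + 4*(sP (n-2))*X^8 + (-1)*(sP (n-2))*(uP n)*X + 2*(sP (n-2))*(uP n)*X^2 + 2*(sP (n-2))*(uP n)*X^4 + (-1)*(sP (n-2))*(tP (n-2)) + (-2)*(sP (n-2))*(tP (n-2))*X + 2*(sP (n-2))*(tP (n-2))*X^2 + 2*(sP (n-2))*(tP (n-2))*X^4) * h4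
    · linear_combination ((-6)*X + (-4)*X^3 + 8*X^4 + 8*X^6) * hR1 + ((-2)*(X^(2^(n-1)))*X) * hR2 + (0) * hR3 + (3*X^2 + 5*X^3 + 2*X^4 + 3*X^5 + (-6)*X^6 + (-9)*X^7 + (-8)*X^8 + (-8)*X^9 + (-2)*X^10 + (-1)*(X^(2^(n-1)))*X + (-2)*(X^(2^(n-1)))*X^2 + (-1)*(X^(2^(n-1)))*X^3 + 2*(X^(2^(n-1)))*X^6 + (-1)*(uP n)*X + 4*(uP n)*X^2 + (-3)*(uP n)*X^3 + 2*(uP n)*X^4 + (-4)*(uP n)*X^5 + 4*(uP n)*X^6 + 2*(uP n)^2*X^2 + (-3)*(tP (n-2))*X + (tP (n-2))*X^2 + (-5)*(tP (n-2))*X^3 + 2*(tP (n-2))*X^4 + (-4)*(tP (n-2))*X^5 + 8*(tP (n-2))*X^6 + 4*(tP (n-2))*(uP n)*X^2 + 2*(tP (n-2))^2*X^2 + (-2)*(sP (n-2))*X + (-2)*(sP (n-2))*X^2 + (-10)*(sP (n-2))*X^3 + 2*(sP (n-2))*X^4 + (-7)*(sP (n-2))*X^5 + 10*(sP (n-2))*X^6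 + 8*(sP (n-2))*X^8 + (-1)*(sP (n-2))*(uP n)*X + 2*(sP (n-2))*(uP n)*X^2 + 4*(sP (n-2))*(uP n)*X^4 + (-2)*(sP (n-2))*(tP (n-2))*X + 2*(sP (n-2))*(tP (n-2))*X^2 + 4*(sP (n-2))*(tP (n-2))*X^4) * h4
    · linear_combination ((-8) + 4*X^2 + 8*X^4) * hR1 + ((-4)*(X^(2^(n-1)))) * hR2 + (0) * hR3 + (4*X + 2*X^2 + 2*X^3 + (-1)*X^4 + (-6)*X^5 + (-3)*X^6 + (-6)*X^7 + (-4)*X^8 + (-2)*(X^(2^(n-1))) + (-1)*(X^(2^(n-1)))*X^2 + 2*(X^(2^(n-1)))*X^4 + (-1)*(X^(2^(n-1)))*(cP (n-2)) + 3*(uP n)*X^2 + (-2)*(uP n)*X^3 + (-5)*(tP (n-2)) + (tP (n-2))*X + 3*(tP (n-2))*X^2 + (-2)*(tP (n-2))*X^3 + 4*(tP (n-2))*X^4 + (-3)*(sP (n-2)) + (-7)*(sP (n-2))*X^2 + (-2)*(sP (n-2))*X^3 + 5*(sP (n-2))*X^4 + 6*(sP (n-2))*X^6 + 2*(sP (n-2))*(uP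 n)*X^2 + (-2)*(sP (n-2))*(tP (n-2)) + 2*(sP (n-2))*(tP (n-2))*X^2) * h4
    · linear_combination ((-9) + (-6)*X + 4*X^3 + 8*X^4 + 4*X^6) * hR1 + ((-6)*(X^(2^(n-1))) + (-2)*(X^(2^(n-1)))*X) * hR2 + ((-1)) * hR3 + (4*X + 4*X^2 + 9*X^3 + 2*X^4 + (-3)*X^5 + (-4)*X^6 + (-9)*X^7 + (-6)*X^8 + (-4)*X^9 + (-1)*X^10 + (-2)*(X^(2^(n-1))) + (-1)*(X^(2^(n-1)))*X + (-4)*(X^(2^(n-1)))*X^2 + (X^(2^(n-1)))*X^3 + (X^(2^(n-1)))*X^4 + (X^(2^(n-1)))*X^6 + (-1)*(X^(2^(n-1)))*(cP (n-2)) + 4*(uP n)*X^2 + (-2)*(uP n)*X^3 + (-2)*(uP n)*X^5 + 2*(uP n)*X^6 + (uP n)^2*X^2 + (-5)*(tP (n-2)) + (tP (n-2))*X + 2*(tP (n-2))*X^4 + (-2)*(tP (n-2))*X^5 + 4*(tP (n-2))*X^6 + (-1)*(tP (n-2))*(X^(2^(n-1))) + 2*(tP (n-2))*(uP n)*X^2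 + (-1)*(tP (n-2))^2 + (tP (n-2))^2*X^2 + (-3)*(sP (n-2)) + (-1)*(sP (n-2))*X + (-12)*(sP (n-2))*X^2 + (-5)*(sP (n-2))*X^3 + 3*(sP (n-2))*X^4 + 7*(sP (n-2))*X^6 + 4*(sP (n-2))*X^8 + (sP (n-2))*(uP n)*X + 2*(sP (n-2))*(uP n)*X^2 + 2*(sP (n-2))*(uP n)*X^4 + (-3)*(sP (n-2))*(tP (n-2)) + 2*(sP (n-2))*(tP (n-2))*X^2 + 2*(sP (n-2))*(tP (n-2))*X^4) * h4
  · -- n odd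
    have hn2 : n % 2 = 1 := Nat.odd_iff.mp ho
    have hd : dd n = 1 := by unfold dd; rw [if_pos (by omega)]
    have hd1 : dd (n+1) = 0 := by unfold dd; rw [if_neg (by omega)]
    have hσU : sg (uP n) = uP n := sg_uP_odd n hn2
    simp only [Gform, Nform, mapMatrix_fin_two, Matrix.mul_fin_two]
    rw [e2, e3, hs', ht', hu', hd, hd1]
    simp only [map_add, map_mul, map_pow, map_one, map_ofNat, map_zero, sg_X, sg_sP, sg_tP,
      hσU, hσA]
    refine Matrix.ext fun i j => ?_
    fin_cases i <;> fin_cases j <;>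
      simp only [Matrix.cons_val', Matrix.cons_val_zero, Matrix.cons_val_one, Matrix.head_cons,
        Matrix.empty_val', Matrix.cons_val_fin_one, Matrix.head_fin_const, Matrix.of_apply,
        Fin.zero_eta, Fin.mk_one, Fin.isValue]
    · linear_combination ((-1) + (-6)*X + 4*X^2 + (-4)*X^3 + 8*X^4 + 4*X^6) * hR1 + ((-2)*(X^(2^(n-1))) + (-2)*(X^(2^(n-1)))*X) * hR2 + ((-1)) * hR3 + (4*X^2 + 2*X^3 + 4*X^4 + 2*X^5 + (-4)*X^6 + (-5)*X^7 + (-6)*X^8 + (-4)*X^9 + (-1)*X^10 + (-1)*(X^(2^(n-1)))*X + (-1)*(X^(2^(n-1)))*X^2 + (-1)*(X^(2^(n-1)))*X^3 + (X^(2^(n-1)))*X^4 + (X^(2^(n-1)))*X^6 + (-1)*(uP n)*X + 4*(uP n)*X^2 + (-2)*(uP n)*X^3 + (-2)*(uP n)*X^5 + 2*(uP n)*X^6 + (uP n)^2*X^2 + (-2)*(tP (n-2))*X + 4*(tP (n-2))*X^2 + (-4)*(tP (n-2))*X^3 + 2*(tP (n-2))*X^4 + (-2)*(tP (n-2))*X^5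 + 4*(tP (n-2))*X^6 + (-1)*(tP (n-2))*(X^(2^(n-1))) + 2*(tP (n-2))*(uP n)*X^2 + (-1)*(tP (n-2))^2 + (tP (n-2))^2*X^2 + (-2)*(sP (n-2))*X + (sP (n-2))*X^2 + (-6)*(sP (n-2))*X^3 + 5*(sP (n-2))*X^4 + (-2)*(sP (n-2))*X^5 + 7*(sP (n-2))*X^6 + 4*(sP (n-2))*X^8 + (-1)*(sP (n-2))*(uP n)*X + 2*(sP (n-2))*(uP n)*X^2 + 2*(sP (n-2))*(uP n)*X^4 + (-1)*(sP (n-2))*(tP (n-2)) + (-2)*(sP (n-2))*(tP (n-2))*X + 2*(sP (n-2))*(tP (n-2))*X^2 + 2*(sP (n-2))*(tP (n-2))*X^4) * h4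
    · linear_combination ((-6)*X + (-4)*X^3 + 8*X^4 + 8*X^6) * hR1 + ((-2)*(X^(2^(n-1)))*X) * hR2 + (0) * hR3 + (3*X^2 + 3*X^3 + 6*X^4 + 5*X^5 + (-2)*X^6 + (-7)*X^7 + (-8)*X^8 + (-8)*X^9 + (-2)*X^10 + (-1)*(X^(2^(n-1)))*X + (-1)*(X^(2^(n-1)))*X^2 + (-1)*(X^(2^(n-1)))*X^3 + 2*(X^(2^(n-1)))*X^6 + (-1)*(uP n)*X + 4*(uP n)*X^2 + (-1)*(uP n)*X^3 + 2*(uP n)*X^4 + (-4)*(uP n)*X^5 + 4*(uP n)*X^6 + 2*(uP n)^2*X^2 + (-3)*(tP (n-2))*X + 3*(tP (n-2))*X^2 + (-3)*(tP (n-2))*X^3 + 2*(tP (n-2))*X^4 + (-4)*(tP (n-2))*X^5 + 8*(tP (n-2))*X^6 + 4*(tP (n-2))*(uP n)*X^2 + 2*(tP (n-2))^2*X^2 + (-2)*(sP (n-2))*X + (-7)*(sP (n-2))*X^3 + 2*(sP (n-2))*X^4 + (-5)*(sP (n-2))*X^5 + 10*(sP (n-2))*X^6 + 8*(sP (n-2))*X^8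 + (-1)*(sP (n-2))*(uP n)*X + 2*(sP (n-2))*(uP n)*X^2 + 4*(sP (n-2))*(uP n)*X^4 + (-2)*(sP (n-2))*(tP (n-2))*X + 2*(sP (n-2))*(tP (n-2))*X^2 + 4*(sP (n-2))*(tP (n-2))*X^4) * h4
    · linear_combination ((-8) + 4*X^2 + 8*X^4) * hR1 + ((-4)*(X^(2^(n-1)))) * hR2 + (0) * hR3 + (4*X + 2*X^2 + 6*X^3 + (-1)*X^4 + (-4)*X^5 + (-3)*X^6 + (-6)*X^7 + (-4)*X^8 + (-2)*(X^(2^(n-1))) + (X^(2^(n-1)))*X + (-1)*(X^(2^(n-1)))*X^2 + 2*(X^(2^(n-1)))*X^4 + (-1)*(X^(2^(n-1)))*(cP (n-2)) + 3*(uP n)*X^2 + (-2)*(uP n)*X^3 + (-5)*(tP (n-2)) + 3*(tP (n-2))*X + 3*(tP (n-2))*X^2 + (-2)*(tP (n-2))*X^3 + 4*(tP (n-2))*X^4 + (-3)*(sP (n-2)) + 2*(sP (n-2))*X + (-4)*(sP (n-2))*X^2 + 5*(sP (n-2))*X^4 + 6*(sP (n-2))*X^6 + 2*(sP (n-2))*(uP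 n)*X^2 + (-2)*(sP (n-2))*(tP (n-2)) + 2*(sP (n-2))*(tP (n-2))*X^2) * h4
    · linear_combination ((-9) + (-6)*X + 4*X^3 + 8*X^4 + 4*X^6) * hR1 + ((-6)*(X^(2^(n-1))) + (-2)*(X^(2^(n-1)))*X) * hR2 + ((-1)) * hR3 + (4*X + 5*X^2 + 11*X^3 + 3*X^4 + (-5)*X^6 + (-7)*X^7 + (-6)*X^8 + (-4)*X^9 + (-1)*X^10 + (-2)*(X^(2^(n-1))) + (-1)*(X^(2^(n-1)))*X + (-3)*(X^(2^(n-1)))*X^2 + (X^(2^(n-1)))*X^3 + (X^(2^(n-1)))*X^4 + (X^(2^(n-1)))*X^6 + (-1)*(X^(2^(n-1)))*(cP (n-2)) + 3*(uP n)*X^2 + (-2)*(uP n)*X^5 + 2*(uP n)*X^6 + (uP n)^2*X^2 + (-5)*(tP (n-2)) + (tP (n-2))*X + (tP (n-2))*X^2 + 2*(tP (n-2))*X^3 + 2*(tP (n-2))*X^4 + (-2)*(tP (n-2))*X^5 + 4*(tP (n-2))*X^6 + (-1)*(tP (n-2))*(X^(2^(n-1))) + 2*(tP (n-2))*(uP n)*X^2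 + (-1)*(tP (n-2))^2 + (tP (n-2))^2*X^2 + (-3)*(sP (n-2)) + (-1)*(sP (n-2))*X + (-8)*(sP (n-2))*X^2 + (-2)*(sP (n-2))*X^3 + 2*(sP (n-2))*X^4 + 2*(sP (n-2))*X^5 + 7*(sP (n-2))*X^6 + 4*(sP (n-2))*X^8 + (sP (n-2))*(uP n)*X + 2*(sP (n-2))*(uP n)*X^2 + 2*(sP (n-2))*(uP n)*X^4 + (-3)*(sP (n-2))*(tP (n-2)) + 2*(sP (n-2))*(tP (n-2))*X^2 + 2*(sP (n-2))*(tP (n-2))*X^4) * h4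

end StmtAux3
noncomputable section StmtAux4
open Polynomial

lemma uP_even' (j : ℕ) (hj : 1 ≤ j) :
    uP (2*j) = ∑ i ∈ Finset.range j, (X:R4)^(2^(2*i)) := by
  induction j, hj using Nat.le_induction with
  | base => rw [show 2*1 = 2 from rfl, uP_two, Finset.sum_range_one]; norm_num
  | succ j hj ih =>
    have h := uP_step (2*j-1)
    rw [show 2*j-1+3 = 2*(j+1) by omega, show 2*j-1+1 = 2*j by omega] at h
    rw [h, ih, Finset.sum_range_succ]

lemma uP_odd' (j : ℕ) (hj : 1 ≤ j) :
    uP (2*j+1) = ∑ i ∈ Finset.range j, (X:R4)^(2^(2*i+1)) := by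
  induction j, hj using Nat.le_induction with
  | base => rw [show 2*1+1 = 3 from rfl, uP_three, Finset.sum_range_one]; norm_num
  | succ j hj ih =>
    have h := uP_step (2*j)
    rw [show 2*j+3 = 2*(j+1)+1 by omega] at h
    rw [h, ih, Finset.sum_range_succ]

variable (r : ℕ → ℤ)

noncomputable def Fm (i : ℕ) : Matrix (Fin 2) (Fin 2) R4 :=
  !![0, Polynomial.C ((r i : ZMod 4)) * X; 1, 1]

noncomputable def Np (n : ℕ) : Matrix (Fin 2) (Fin 2) R4 :=
  ((List.range (2^n)).map (fun i => Fm r (2^n + i))).prod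

noncomputable def Gp (n : ℕ) : Matrix (Fin 2) (Fin 2) R4 :=
  ((List.range (2^n)).map (Fm r)).prod

variable (hr0 : r 0 = 1) (hre : ∀ n, r (2 * n) = r n)
  (hro : ∀ n, r (2 * n + 1) = (-1) ^ n * r n)

section rvals
include hr0 hre hro

lemma rv1 : r 1 = 1 := by have := hro 0; simpa [hr0] using this
lemma rv2 : r 2 = 1 := by have := hre 1; rw [show 2*1 = 2 from rfl, rv1 r hr0 hre hro] at this; exact this
lemma rv3 : r 3 = -1 := by
  have := hro 1; rw [show 2*1+1 = 3 from rfl, rv1 r hr0 hre hro] at this; simpa using this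
lemma rv4 : r 4 = 1 := by
  have := hre 2; rw [show 2*2 = 4 from rfl, rv2 r hr0 hre hro] at this; exact this
lemma rv5 : r 5 = 1 := by
  have := hro 2; rw [show 2*2+1 = 5 from rfl, rv2 r hr0 hre hro] at this; simpa using this
lemma rv6 : r 6 = -1 := by
  have := hre 3; rw [show 2*3 = 6 from rfl, rv3 r hr0 hre hro] at this; exact this
lemma rv7 : r 7 = 1 := by
  have := hro 3; rw [show 2*3+1 = 7 from rfl, rv3 r hr0 hre hro] at this; simpa [pow_succ] using this

lemma keyA : ∀ n, 1 ≤ n → ∀ j, j < 2^n → r (2^(n+1) + j) = r j := by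
  intro n hn
  induction n, hn using Nat.le_induction with
  | base =>
    intro j hj
    interval_cases j
    · rw [show 2^(1+1) + 0 = 4 from rfl, rv4 r hr0 hre hro, hr0]
    · rw [show 2^(1+1) + 1 = 5 from rfl, rv5 r hr0 hre hro, rv1 r hr0 hre hro]
  | succ n hn ih =>
    intro j hj
    have hp : (2:ℕ)^(n+1) = 2*2^n := by rw [pow_succ]; ring
    have hp2 : (2:ℕ)^(n+1+1) = 2*2^(n+1) := by rw [pow_succ]; ring
    rcases Nat.even_or_odd j with ⟨m, rfl⟩ | ⟨m, rfl⟩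
    · have hm : m < 2^n := by omega
      have h1 : 2^(n+1+1) + (m+m) = 2*(2^(n+1)+m) := by rw [hp2]; ring
      rw [h1, hre, ih m hm, show m + m = 2*m by ring, hre]
    · have hm : m < 2^n := by omega
      have h1 : 2^(n+1+1) + (2*m+1) = 2*(2^(n+1)+m)+1 := by rw [hp2]; ring
      rw [h1, hro, ih m hm, hro]
      congr 1
      rw [pow_add, Even.neg_one_pow (by exact_mod_cast Nat.even_iff.mpr (by
        have := even_two_pow (n+1) (by omega)
        exact Nat.even_iff.mp this)), one_mul]

lemma keyB : ∀ n, 1 ≤ n → ∀ j, j < 2^n → r (3*2^n + j) = - r (2^n + j) := by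
  intro n hn
  induction n, hn using Nat.le_induction with
  | base =>
    intro j hj
    interval_cases j
    · rw [show 3*2^1 + 0 = 6 from rfl, show 2^1 + 0 = 2 from rfl,
        rv6 r hr0 hre hro, rv2 r hr0 hre hro]
    · rw [show 3*2^1 + 1 = 7 from rfl, show 2^1 + 1 = 3 from rfl,
        rv7 r hr0 hre hro, rv3 r hr0 hre hro]; ring
  | succ n hn ih =>
    intro j hj
    have hp : (2:ℕ)^(n+1) = 2*2^n := by rw [pow_succ]; ring
    have heven : Even (2^n) := even_two_pow n (by omega)
    rcases Nat.even_or_odd j with ⟨m, rfl⟩ | ⟨m, rfl⟩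
    · have hm : m < 2^n := by omega
      have h1 : 3*2^(n+1) + (m+m) = 2*(3*2^n+m) := by rw [hp]; ring
      have h2 : 2^(n+1) + (m+m) = 2*(2^n+m) := by rw [hp]; ring
      rw [h1, hre, ih m hm, h2, hre]
    · have hm : m < 2^n := by omega
      have h1 : 3*2^(n+1) + (2*m+1) = 2*(3*2^n+m)+1 := by rw [hp]; ring
      have h2 : 2^(n+1) + (2*m+1) = 2*(2^n+m)+1 := by rw [hp]; ring
      rw [h1, hro, ih m hm, h2, hro]
      have e3 : ((-1:ℤ))^(3*2^n+m) = (-1)^m := by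
        rw [pow_add, Even.neg_one_pow (by exact_mod_cast Nat.even_iff.mpr (by
          have := Nat.even_iff.mp heven; omega)), one_mul]
      have e4 : ((-1:ℤ))^(2^n+m) = (-1)^m := by
        rw [pow_add, Even.neg_one_pow (by exact_mod_cast Nat.even_iff.mpr (by
          exact Nat.even_iff.mp heven)), one_mul]
      rw [e3, e4]
      ring

end rvals

lemma Gp_succ (n : ℕ) : Gp r (n+1) = Gp r n * Np r n := by
  unfold Gp Np
  have h2 : (2:ℕ)^(n+1) = 2^n + 2^n := by rw [pow_succ]; ring
  rw [h2, List.range_add, List.map_append, List.prod_append, List.map_map]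
  rfl

lemma Np_succ (n : ℕ) (hn : 1 ≤ n)
    (hr0 : r 0 = 1) (hre : ∀ n, r (2 * n) = r n)
    (hro : ∀ n, r (2 * n + 1) = (-1) ^ n * r n) :
    Np r (n+1) = Gp r n * (RingHom.mapMatrix sg) (Np r n) := by
  unfold Gp Np
  have h2 : (2:ℕ)^(n+1) = 2^n + 2^n := by rw [pow_succ]; ring
  rw [h2, List.range_add, List.map_append, List.prod_append, List.map_map]
  have hmap1 : List.map (fun i => Fm r (2 ^ n + 2 ^ n + i)) (List.range (2 ^ n))
      = List.map (Fm r) (List.range (2 ^ n)) := by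
    refine List.map_congr_left fun i hi => ?_
    have hi' : i < 2^n := List.mem_range.mp hi
    have hA := keyA r hr0 hre hro n hn i hi'
    unfold Fm
    rw [show 2^n + 2^n + i = 2^(n+1) + i by omega, hA]
  have hmap2 : List.map ((fun i => Fm r (2 ^ n + 2 ^ n + i)) ∘ fun x => 2 ^ n + x)
      (List.range (2 ^ n))
      = List.map (⇑(RingHom.mapMatrix sg) ∘ fun i => Fm r (2 ^ n + i)) (List.range (2 ^ n)) := by
    refine List.map_congr_left fun i hi => ?_
    have hi' : i < 2^n := List.mem_range.mp hi
    have hb := keyB r hr0 hre hro n hn i hi'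
    simp only [Function.comp_apply]
    unfold Fm
    rw [show 2^n + 2^n + (2^n + i) = 3*2^n + i by omega, hb]
    rw [mapMatrix_fin_two]
    simp only [map_zero, map_one, map_mul, sg_X]
    rw [show sg (Polynomial.C ((r (2^n + i) : ZMod 4))) = Polynomial.C ((r (2^n + i) : ZMod 4))
      from Polynomial.eval₂_C _ _]
    push_cast
    refine Matrix.ext fun a b => ?_
    fin_cases a <;> fin_cases b <;>
      simp only [Matrix.cons_val', Matrix.cons_val_zero, Matrix.cons_val_one, Matrix.head_cons,
        Matrix.empty_val', Matrix.cons_val_fin_one, Matrix.head_fin_const, Matrix.of_apply,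
        Fin.zero_eta, Fin.mk_one, Fin.isValue, map_neg]
    all_goals ring
  rw [hmap1, hmap2, map_list_prod, List.map_map]

end StmtAux4
noncomputable section StmtAux5
open Polynomial

variable (r : ℕ → ℤ) (hr0 : r 0 = 1) (hre : ∀ n, r (2 * n) = r n)
  (hro : ∀ n, r (2 * n + 1) = (-1) ^ n * r n)

include hr0 hre hro

lemma base_G2 : Gp r 2 = !![X + X^2, X; 1 + 2*X, 1 + X - X^2] := by
  unfold Gp
  rw [show (2:ℕ)^2 = 4 from rfl, show List.range 4 = [0,1,2,3] from rfl]
  simp only [List.map_cons, List.map_nil, List.prod_cons, List.prod_nil, mul_one]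
  unfold Fm
  rw [hr0, rv1 r hr0 hre hro, rv2 r hr0 hre hro, rv3 r hr0 hre hro]
  push_cast
  simp only [map_one, map_neg, Matrix.mul_fin_two]
  refine Matrix.ext fun a b => ?_
  fin_cases a <;> fin_cases b <;>
    simp only [Matrix.cons_val', Matrix.cons_val_zero, Matrix.cons_val_one, Matrix.head_cons,
      Matrix.empty_val', Matrix.cons_val_fin_one, Matrix.head_fin_const, Matrix.of_apply,
      Fin.zero_eta, Fin.mk_one, Fin.isValue]
  all_goals ring

lemma base_N2 : Np r 2 = !![X - X^2, X; 1, 1 + X + X^2] := by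
  unfold Np
  rw [show (2:ℕ)^2 = 4 from rfl, show List.range 4 = [0,1,2,3] from rfl]
  simp only [List.map_cons, List.map_nil, List.prod_cons, List.prod_nil, mul_one]
  unfold Fm
  rw [show (4:ℕ)+0 = 4 from rfl, show (4:ℕ)+1 = 5 from rfl, show (4:ℕ)+2 = 6 from rfl,
    show (4:ℕ)+3 = 7 from rfl]
  rw [rv4 r hr0 hre hro, rv5 r hr0 hre hro, rv6 r hr0 hre hro, rv7 r hr0 hre hro]
  push_cast
  simp only [map_one, map_neg, Matrix.mul_fin_two]
  refine Matrix.ext fun a b => ?_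
  fin_cases a <;> fin_cases b <;>
    simp only [Matrix.cons_val', Matrix.cons_val_zero, Matrix.cons_val_one, Matrix.head_cons,
      Matrix.empty_val', Matrix.cons_val_fin_one, Matrix.head_fin_const, Matrix.of_apply,
      Fin.zero_eta, Fin.mk_one, Fin.isValue]
  all_goals ring

lemma base_N3 : Np r 3 =
    !![X - X^2 - 2*X^3 - X^4, X - 2*X^2;
       1 - 4*X^2 - 2*X^3, 1 - X - 3*X^2 + 2*X^3 - X^4] := by
  rw [show Np r 3 = Np r (2+1) from rfl, Np_succ r 2 (by norm_num) hr0 hre hro,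
    base_G2 r hr0 hre hro, base_N2 r hr0 hre hro, mapMatrix_fin_two]
  simp only [map_add, map_sub, map_mul, map_one, map_pow, map_ofNat, sg_X]
  rw [Matrix.mul_fin_two]
  refine Matrix.ext fun a b => ?_
  fin_cases a <;> fin_cases b <;>
    simp only [Matrix.cons_val', Matrix.cons_val_zero, Matrix.cons_val_one, Matrix.head_cons,
      Matrix.empty_val', Matrix.cons_val_fin_one, Matrix.head_fin_const, Matrix.of_apply,
      Fin.zero_eta, Fin.mk_one, Fin.isValue]
  all_goals ring

lemma base_G3 : Gp r 3 =
    !![X + X^2 - X^4, X + 2*X^2 + 2*X^3;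
       1 + 2*X - 2*X^3, 1 + 3*X + 3*X^2 - X^4] := by
  rw [show (3:ℕ) = 2+1 from rfl, Gp_succ, base_G2 r hr0 hre hro, base_N2 r hr0 hre hro,
    Matrix.mul_fin_two]
  refine Matrix.ext fun a b => ?_
  fin_cases a <;> fin_cases b <;>
    simp only [Matrix.cons_val', Matrix.cons_val_zero, Matrix.cons_val_one, Matrix.head_cons,
      Matrix.empty_val', Matrix.cons_val_fin_one, Matrix.head_fin_const, Matrix.of_apply,
      Fin.zero_eta, Fin.mk_one, Fin.isValue]
  all_goals ring

omit hr0 hre hro in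
lemma Nform3 : Nform 3 =
    !![X - X^2 - 2*X^3 - X^4, X - 2*X^2;
       1 - 4*X^2 - 2*X^3, 1 - X - 3*X^2 + 2*X^3 - X^4] := by
  have h4 : (4 : R4) = 0 := h4R4
  unfold Nform
  rw [show (3:ℕ)-2 = 1 from rfl, show (3:ℕ)-1 = 2 from rfl, show (2:ℕ)^2 = 4 from rfl,
    sP_one, tP_one, uP_three, show dd 3 = 1 from by unfold dd; rw [if_pos rfl]]
  refine Matrix.ext fun a b => ?_
  fin_cases a <;> fin_cases b <;>
    simp only [Matrix.cons_val', Matrix.cons_val_zero, Matrix.cons_val_one, Matrix.head_cons,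
      Matrix.empty_val', Matrix.cons_val_fin_one, Matrix.head_fin_const, Matrix.of_apply,
      Fin.zero_eta, Fin.mk_one, Fin.isValue]
  · linear_combination (X^2 + X^3 + X^4 + X^5) * h4
  · linear_combination (X^2 + X^3 + X^4 + X^5) * h4
  · linear_combination (X + 2*X^2 + X^3) * h4
  · linear_combination (X + 2*X^2 + X^4 + X^5) * h4

omit hr0 hre hro in
lemma Gform3 : Gform 3 =
    !![X + X^2 - X^4, X + 2*X^2 + 2*X^3;
       1 + 2*X - 2*X^3, 1 + 3*X + 3*X^2 - X^4] := by
  have h4 : (4 : R4) = 0 := h4R4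
  unfold Gform
  rw [show (3:ℕ)-2 = 1 from rfl, show (3:ℕ)-1 = 2 from rfl, show (2:ℕ)^2 = 4 from rfl,
    sP_one, tP_one, uP_three, show dd 3 = 1 from by unfold dd; rw [if_pos rfl]]
  refine Matrix.ext fun a b => ?_
  fin_cases a <;> fin_cases b <;>
    simp only [Matrix.cons_val', Matrix.cons_val_zero, Matrix.cons_val_one, Matrix.head_cons,
      Matrix.empty_val', Matrix.cons_val_fin_one, Matrix.head_fin_const, Matrix.of_apply,
      Fin.zero_eta, Fin.mk_one, Fin.isValue]
  · linear_combination (X^2 + X^3 + X^4 + X^5) * h4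
  · linear_combination (X^3 + X^4 + X^5) * h4
  · linear_combination (X^2 + X^3) * h4
  · linear_combination (X^2 + X^3 + X^4 + X^5) * h4

lemma main_ind : ∀ n, 3 ≤ n → Np r n = Nform n ∧ Gp r n = Gform n := by
  intro n hn
  induction n, hn using Nat.le_induction with
  | base =>
    exact ⟨(base_N3 r hr0 hre hro).trans (Nform3).symm,
      (base_G3 r hr0 hre hro).trans (Gform3).symm⟩
  | succ n hn ih =>
    constructor
    · rw [Np_succ r n (by omega) hr0 hre hro, ih.1, ih.2, ← step_N n hn]
    · rw [Gp_succ, ih.1, ih.2, ← step_G n hn]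

end StmtAux5
noncomputable section StmtAux6
open Polynomial

noncomputable def phiR : Polynomial ℤ →+* R4 :=
  Polynomial.mapRingHom (Int.castRingHom (ZMod 4))

lemma phi_X : phiR X = X := by
  simp [phiR, Polynomial.coe_mapRingHom]

lemma phi_Xpow (k : ℕ) : phiR (X ^ k) = X ^ k := by rw [map_pow, phi_X]

lemma phi_step (r : ℕ → ℤ) (i : ℕ) : (RingHom.mapMatrix phiR) (step r i) = Fm r i := by
  unfold step Fm
  rw [mapMatrix_fin_two]
  simp [phiR, Polynomial.coe_mapRingHom, Polynomial.map_mul, Polynomial.map_C]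

lemma phi_Spoly (m : ℕ) : phiR (Spoly m) = sP m := by
  unfold Spoly sP
  rw [map_sum]
  exact Finset.sum_congr rfl fun i _ => phi_Xpow _

lemma phi_Tpoly (m : ℕ) : phiR (Tpoly m) = tP m := by
  unfold Tpoly tP
  rw [map_sum]
  refine Finset.sum_congr rfl fun i _ => ?_
  rw [map_sum]
  exact Finset.sum_congr rfl fun k _ => phi_Xpow _

lemma phi_Sepoly (m : ℕ) : phiR (Sepoly m) = ∑ i ∈ Finset.range (m+1), (X:R4)^(2^(2*i)) := by
  unfold Sepoly
  rw [map_sum]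
  exact Finset.sum_congr rfl fun i _ => phi_Xpow _

lemma phi_Sopoly (m : ℕ) : phiR (Sopoly m) = ∑ i ∈ Finset.range (m+1), (X:R4)^(2^(2*i+1)) := by
  unfold Sopoly
  rw [map_sum]
  exact Finset.sum_congr rfl fun i _ => phi_Xpow _

lemma conv_coeff (p q : Polynomial ℤ) (h : phiR p = phiR q) :
    ∀ i, p.coeff i ≡ q.coeff i [ZMOD 4] := by
  intro i
  have hc := congrArg (fun pp => Polynomial.coeff pp i) h
  simp only [phiR, Polynomial.coe_mapRingHom, Polynomial.coeff_map] at hc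
  have h2 : ((p.coeff i : ℤ) : ZMod 4) = ((q.coeff i : ℤ) : ZMod 4) := by exact_mod_cast hc
  exact_mod_cast (ZMod.intCast_eq_intCast_iff _ _ 4).mp h2

end StmtAux6

/-- (Lemma 5.3 (9)–(12).) Mod-4 description of the polynomials `Q^b` built from the blocks
`r_{2^n} ⋯ r_{2^{n+1}-1}` of the Rudin–Shapiro sequence. -/
theorem stmt15 (r : ℕ → ℤ) (hr0 : r 0 = 1)
    (hre : ∀ n, r (2 * n) = r n) (hro : ∀ n, r (2 * n + 1) = (-1) ^ n * r n)
    (Pb Qb : ℕ → Polynomial ℤ)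
    (hPQb : ∀ n : ℕ, 2 ≤ n →
      !![Pb (2 ^ n - 2), Pb (2 ^ n - 1); Qb (2 ^ n - 2), Qb (2 ^ n - 1)] =
        ((List.range (2 ^ n)).map (fun i => step r (2 ^ n + i))).prod) :
    ∀ j : ℕ, 2 ≤ j →
      (∀ i : ℕ, (Qb (2 ^ (2 * j) - 2)).coeff i ≡
        (1 + 2 * (1 + X) * Spoly (2 * j - 2) : Polynomial ℤ).coeff i [ZMOD 4]) ∧
      (∀ i : ℕ, (Qb (2 ^ (2 * j + 1) - 2)).coeff i ≡
        (1 + 2 * X + 2 * (1 + X) * Spoly (2 * j - 1) :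
          Polynomial ℤ).coeff i [ZMOD 4]) ∧
      (∀ i : ℕ, (Qb (2 ^ (2 * j) - 1)).coeff i ≡
        (1 + 2 * X ^ 2 + 2 * X ^ 5 + (3 + 2 * X ^ 3) * Spoly (2 * j - 2) +
          (2 + 2 * X) * Tpoly (2 * j - 2) + 2 * X * Sepoly (j - 1) +
          X ^ (2 ^ (2 * j - 1)) : Polynomial ℤ).coeff i [ZMOD 4]) ∧
      (∀ i : ℕ, (Qb (2 ^ (2 * j + 1) - 1)).coeff i ≡
        (1 + 2 * X ^ 2 + 2 * X ^ 5 + (3 + 2 * X ^ 3) * Spoly (2 * j - 1) +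
          (2 + 2 * X) * Tpoly (2 * j - 1) + 2 * X * Sopoly (j - 1) +
          X ^ (2 ^ (2 * j)) : Polynomial ℤ).coeff i [ZMOD 4]) := by
  intro j hj
  have key : ∀ n, 3 ≤ n →
      phiR (Qb (2^n - 2)) = Nform n 1 0 ∧ phiR (Qb (2^n - 1)) = Nform n 1 1 := by
    intro n hn
    have hNp : Np r n = Nform n := (main_ind r hr0 hre hro n hn).1
    have h := congrArg (RingHom.mapMatrix phiR) (hPQb n (by omega))
    rw [mapMatrix_fin_two, map_list_prod, List.map_map] at h
    have hm : List.map (⇑(RingHom.mapMatrix phiR) ∘ fun i => step r (2 ^ n + i))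
        (List.range (2^n)) = List.map (fun i => Fm r (2^n + i)) (List.range (2^n)) :=
      List.map_congr_left fun i _ => phi_step r _
    rw [hm] at h
    have h2 : (!![phiR (Pb (2^n-2)), phiR (Pb (2^n-1));
        phiR (Qb (2^n-2)), phiR (Qb (2^n-1))] : Matrix (Fin 2) (Fin 2) R4) = Nform n := by
      rw [h]; exact hNp
    constructor
    · have := congrFun (congrFun h2 1) 0; simpa using this
    · have := congrFun (congrFun h2 1) 1; simpa using this
  obtain ⟨hq10, hq11⟩ := key (2*j) (by omega)
  obtain ⟨hq10', hq11'⟩ := key (2*j+1) (by omega)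
  have hdE : dd (2*j) = 0 := by unfold dd; rw [if_neg (by omega)]
  have hdO : dd (2*j+1) = 1 := by unfold dd; rw [if_pos (by omega)]
  have hSe : uP (2*j) = ∑ i ∈ Finset.range ((j-1)+1), (X:R4)^(2^(2*i)) := by
    rw [show (j-1)+1 = j by omega]; exact uP_even' j (by omega)
  have hSo : uP (2*j+1) = ∑ i ∈ Finset.range ((j-1)+1), (X:R4)^(2^(2*i+1)) := by
    rw [show (j-1)+1 = j by omega]; exact uP_odd' j (by omega)
  have eE2 : 2*j+1-2 = 2*j-1 := by omega
  have eE1 : 2*j+1-1 = 2*j := by omega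
  refine ⟨fun i => conv_coeff _ _ ?_ i, fun i => conv_coeff _ _ ?_ i,
    fun i => conv_coeff _ _ ?_ i, fun i => conv_coeff _ _ ?_ i⟩
  · rw [hq10]
    simp only [map_add, map_mul, map_one, map_ofNat, phi_X, phi_Spoly]
    simp only [Nform, Matrix.cons_val', Matrix.cons_val_zero, Matrix.cons_val_one,
      Matrix.head_cons, Matrix.empty_val', Matrix.cons_val_fin_one, Matrix.head_fin_const,
      Matrix.of_apply, Fin.isValue]
    rw [hdE]
    ring
  · rw [hq10']
    simp only [map_add, map_mul, map_one, map_ofNat, phi_X, phi_Spoly]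
    simp only [Nform, Matrix.cons_val', Matrix.cons_val_zero, Matrix.cons_val_one,
      Matrix.head_cons, Matrix.empty_val', Matrix.cons_val_fin_one, Matrix.head_fin_const,
      Matrix.of_apply, Fin.isValue]
    rw [hdO, eE2]
    ring
  · rw [hq11]
    simp only [map_add, map_mul, map_one, map_ofNat, phi_X, phi_Xpow, phi_Spoly, phi_Tpoly,
      phi_Sepoly]
    simp only [Nform, Matrix.cons_val', Matrix.cons_val_zero, Matrix.cons_val_one,
      Matrix.head_cons, Matrix.empty_val', Matrix.cons_val_fin_one, Matrix.head_fin_const,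
      Matrix.of_apply, Fin.isValue]
    rw [hSe]
    ring
  · rw [hq11']
    simp only [map_add, map_mul, map_one, map_ofNat, phi_X, phi_Xpow, phi_Spoly, phi_Tpoly,
      phi_Sopoly]
    simp only [Nform, Matrix.cons_val', Matrix.cons_val_zero, Matrix.cons_val_one,
      Matrix.head_cons, Matrix.empty_val', Matrix.cons_val_fin_one, Matrix.head_fin_const,
      Matrix.of_apply, Fin.isValue]
    rw [hSo, eE2, eE1]
    ring
end

section
/- In ℤ[[x]], the generating function of the Catalan numbers satisfies x·φ(x) ≡ S_∞(x) + 2T_∞(x) + 2(x + x²)·S_∞(x) + 2(x² + x³ + x⁴) (mod 4); equivalently, φ(x) ≡ x^{-1}S_∞(x) + 2x^{-1}T_∞(x) + 2(1 + x)·S_∞(x) + 2(x + x² + x³) (mod 4). In particular, S_∞(x) ≡ x·φ(x) (mod 2). -/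
open PowerSeries Classical

/-- The generating function of the Catalan numbers. -/
noncomputable def phi : PowerSeries ℤ := PowerSeries.mk fun n => (catalan n : ℤ)

/-- `S_∞(x) = Σ_{i ≥ 0} x^{2^i}`. -/
noncomputable def Sinf : PowerSeries ℤ :=
  PowerSeries.mk fun n => if ∃ k : ℕ, n = 2 ^ k then 1 else 0

/-- `T_∞(x) = Σ_{i ≥ 3} Σ_{k=2}^{i-1} x^{2^i + 2^k}` (each such exponent is hit exactly
once, by uniqueness of binary expansions). -/
noncomputable def Tinf : PowerSeries ℤ :=
  PowerSeries.mk fun m =>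
    if ∃ i k : ℕ, 3 ≤ i ∧ 2 ≤ k ∧ k < i ∧ m = 2 ^ i + 2 ^ k then 1 else 0

open Finset

def P1 (m : ℕ) : Prop := ∃ k : ℕ, m = 2 ^ k
def P2 (m : ℕ) : Prop := ∃ a b : ℕ, a < b ∧ m = 2 ^ a + 2 ^ b
def PT (m : ℕ) : Prop := ∃ i k : ℕ, 3 ≤ i ∧ 2 ≤ k ∧ k < i ∧ m = 2 ^ i + 2 ^ k

lemma dvd_helper {a x : ℕ} (h1 : 2^(a+1) ∣ 2^a + x) (h2 : 2^(a+1) ∣ x) : False := by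
  have h3 : 2^(a+1) ∣ 2^a := by
    have h4 := Nat.dvd_sub h1 h2
    simpa using h4
  have h0 : 1 ≤ (2:ℕ)^a := Nat.one_le_two_pow
  have h5 := Nat.le_of_dvd (by omega) h3
  have h6 : (2:ℕ)^(a+1) = 2*2^a := by ring
  omega

lemma rep_unique {a b c d : ℕ} (hab : a < b) (hcd : c < d) (h : 2^a + 2^b = 2^c + 2^d) :
    a = c ∧ b = d := by
  have key : ∀ a b c d : ℕ, a < b → c < d → 2^a + 2^b = 2^c + 2^d → ¬ a < c := by
    intro a b c d hab hcd h hac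
    refine dvd_helper (a := a) (x := 2^b) ?_ (pow_dvd_pow 2 hab)
    rw [h]
    exact dvd_add (pow_dvd_pow 2 hac) (pow_dvd_pow 2 (le_trans hac hcd.le))
  have h1 := key a b c d hab hcd h
  have h2 := key c d a b hcd hab h.symm
  have hac : a = c := by omega
  subst hac
  have hbd : (2:ℕ)^b = 2^d := by omega
  exact ⟨rfl, Nat.pow_right_injective (le_refl 2) hbd⟩

lemma not_P1_P2 {a b c : ℕ} (hab : a < b) (h : 2^a + 2^b = 2^c) : False := by
  have hac : a < c := by
    have hx : (2:ℕ)^a < 2^c := by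
      have := Nat.one_le_two_pow (n := b); omega
    exact (Nat.pow_lt_pow_iff_right one_lt_two).1 hx
  refine dvd_helper (a := a) (x := 2^b) ?_ (pow_dvd_pow 2 hab)
  rw [h]
  exact pow_dvd_pow 2 hac

lemma count_lemma (n t : ℕ) (ht : ∀ k, k < t → 2*k < n)
    (ht2 : ∀ a b : ℕ, a < b → n + 2 = 2^a + 2^b → 2^a - 1 < t) :
    (∑ k ∈ range t, if P1 (k+1) ∧ P1 (n-k+1) then (1:ℕ) else 0)
      = if P2 (n+2) then 1 else 0 := by
  by_cases hP2 : P2 (n+2)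
  · rw [if_pos hP2]
    obtain ⟨a, b, hab, heq⟩ := hP2
    have hab2 : (2:ℕ)^a < 2^b := Nat.pow_lt_pow_right one_lt_two hab
    have ha1 : 1 ≤ (2:ℕ)^a := Nat.one_le_two_pow
    rw [Finset.sum_eq_single_of_mem (2^a - 1) (Finset.mem_range.2 (ht2 a b hab heq))]
    · rw [if_pos ⟨⟨a, by omega⟩, ⟨b, by omega⟩⟩]
    · intro c hc hne
      rw [if_neg]
      rintro ⟨⟨x, hx⟩, ⟨y, hy⟩⟩
      have hcn := ht c (Finset.mem_range.1 hc)
      have hxy : x < y := by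
        have hlt : (2:ℕ)^x < 2^y := by omega
        exact (Nat.pow_lt_pow_iff_right one_lt_two).1 hlt
      have hsum : 2^x + 2^y = 2^a + 2^b := by omega
      obtain ⟨hxa, -⟩ := rep_unique hxy hab hsum
      subst hxa
      omega
  · rw [if_neg hP2]
    apply Finset.sum_eq_zero
    intro c hc
    rw [if_neg]
    rintro ⟨⟨x, hx⟩, ⟨y, hy⟩⟩
    have hcn := ht c (Finset.mem_range.1 hc)
    have hxy : x < y := by
      have hlt : (2:ℕ)^x < 2^y := by omega
      exact (Nat.pow_lt_pow_iff_right one_lt_two).1 hlt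
    exact hP2 ⟨x, y, hxy, by omega⟩

lemma pow2_cases (k : ℕ) : 2^k = 1 ∨ 2^k = 2 ∨ (4 ∣ 2^k ∧ 4 ≤ 2^k) := by
  match k with
  | 0 => exact Or.inl rfl
  | 1 => exact Or.inr (Or.inl rfl)
  | (j+2) =>
    refine Or.inr (Or.inr ⟨⟨2^j, by ring⟩, ?_⟩)
    have h := Nat.one_le_two_pow (n := j)
    have h2 : (2:ℕ)^(j+2) = 4*2^j := by ring
    omega

lemma P1_double (l : ℕ) : P1 (l+1) ↔ P1 (l+l+2) := by
  constructor
  · rintro ⟨k, hk⟩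
    exact ⟨k+1, by rw [pow_succ]; omega⟩
  · rintro ⟨k, hk⟩
    match k with
    | 0 => omega
    | (j+1) => exact ⟨j, by rw [pow_succ] at hk; omega⟩

lemma not_P1_odd {l : ℕ} : ¬ P1 (l+l+3) := by
  rintro ⟨k, hk⟩
  match k with
  | 0 => omega
  | (j+1) => rw [pow_succ] at hk; omega

lemma catalan_succ_range (n : ℕ) :
    catalan (n+1) = ∑ k ∈ range (n+1), catalan k * catalan (n-k) := by
  rw [catalan_succ]
  exact (Finset.sum_range (fun i => catalan i * catalan (n - i))).symm

lemma sum_split {M : Type*} [AddCommMonoid M] (f : ℕ → M) (n t : ℕ) (ht : t ≤ n+1)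
    (hf : ∀ k ≤ n, f (n - k) = f k) :
    ∑ k ∈ range (n+1), f k = (∑ k ∈ range t, f k) + ∑ k ∈ range (n+1-t), f k := by
  rw [range_eq_Ico, ← Finset.sum_Ico_consecutive f (Nat.zero_le t) ht]
  congr 1
  · rw [range_eq_Ico]
  refine Finset.sum_nbij' (fun k => n - k) (fun k => n - k) ?_ ?_ ?_ ?_ ?_
  · intro a ha; simp only [mem_Ico, mem_range] at ha ⊢; omega
  · intro a ha; simp only [mem_Ico, mem_range] at ha ⊢; omega
  · intro a ha; simp only [mem_Ico, mem_range] at ha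
    exact Nat.sub_sub_self (by omega)
  · intro a ha; simp only [mem_Ico, mem_range] at ha
    exact Nat.sub_sub_self (by omega)
  · intro a ha; simp only [mem_Ico, mem_range] at ha
    exact (hf a (by omega)).symm

lemma cat_symm (n : ℕ) : ∀ k ≤ n, catalan (n-k) * catalan (n-(n-k)) = catalan k * catalan (n-k) := by
  intro k hk
  rw [Nat.sub_sub_self hk, mul_comm]

lemma cat2 (n : ℕ) : (catalan n : ZMod 2) = if P1 (n+1) then 1 else 0 := by
  induction n using Nat.strong_induction_on with
  | _ n ih =>
    match n with
    | 0 => rw [if_pos ⟨0, rfl⟩]; simp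
    | (m+1) =>
      have hsplit := sum_split (fun k => catalan k * catalan (m-k)) m
      rcases Nat.even_or_odd m with ⟨l, hl⟩ | ⟨l, hl⟩
      · subst hl
        have h := hsplit l (by omega) (cat_symm _)
        have h2 : l + l + 1 - l = l + 1 := by omega
        rw [h2, Finset.sum_range_succ (fun k => catalan k * catalan (l+l-k)) l] at h
        have hll : l + l - l = l := by omega
        rw [hll] at h
        have hc : (catalan (l+l+1) : ZMod 2)
            = (catalan l : ZMod 2) * (catalan l : ZMod 2) := by
          rw [catalan_succ_range, h]
          push_cast
          rw [← add_assoc, CharTwo.add_self_eq_zero, zero_add]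
        have hxx : ∀ x : ZMod 2, x * x = x := by decide
        rw [hc, hxx, ih l (by omega)]
        have he : l + l + 1 + 1 = l + l + 2 := by ring
        rw [he, if_congr (P1_double l) rfl rfl]
      · subst hl
        have h := hsplit (l+1) (by omega) (cat_symm _)
        have h2 : 2*l + 1 + 1 - (l+1) = l + 1 := by omega
        rw [h2] at h
        have hc : (catalan (2*l+1+1) : ZMod 2) = 0 := by
          rw [catalan_succ_range, h]
          push_cast
          rw [CharTwo.add_self_eq_zero]
        rw [hc]
        have he : 2*l + 1 + 1 + 1 = l + l + 3 := by ring
        rw [he, if_neg not_P1_odd]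

lemma lift24 {a b : ℕ} (h : (a : ZMod 2) = (b : ZMod 2)) :
    ((2*a : ℕ) : ZMod 4) = ((2*b : ℕ) : ZMod 4) := by
  rw [ZMod.natCast_eq_natCast_iff] at h ⊢
  have h2 := Nat.ModEq.mul_left' (c := 2) h
  simpa using h2

lemma sum_parity (m t : ℕ) :
    ((∑ k ∈ range t, catalan k * catalan (m-k) : ℕ) : ZMod 2)
      = ((∑ k ∈ range t, if P1 (k+1) ∧ P1 (m-k+1) then (1:ℕ) else 0 : ℕ) : ZMod 2) := by
  push_cast
  apply Finset.sum_congr rfl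
  intro k hk
  rw [cat2 k, cat2 (m-k)]
  by_cases h1 : P1 (k+1) <;> by_cases h2 : P1 (m-k+1) <;> simp [h1, h2]

lemma square4 (c : ℕ) {p : Prop} (h : (c : ZMod 2) = if p then 1 else 0) :
    ((c*c : ℕ) : ZMod 4) = if p then 1 else 0 := by
  have one2 : (1 : ZMod 2) = ((1:ℕ) : ZMod 2) := by norm_num
  have zero2 : (0 : ZMod 2) = ((0:ℕ) : ZMod 2) := by norm_num
  by_cases hp : p
  · rw [if_pos hp] at h ⊢
    rw [one2, ZMod.natCast_eq_natCast_iff'] at h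
    obtain ⟨q, hq⟩ : ∃ q, c = 2*q+1 := ⟨c/2, by omega⟩
    subst hq
    have hcc : (2*q+1)*(2*q+1) = 4*(q*q+q)+1 := by ring
    rw [hcc, show (1 : ZMod 4) = ((1:ℕ) : ZMod 4) by norm_num,
      ZMod.natCast_eq_natCast_iff']
    omega
  · rw [if_neg hp] at h ⊢
    rw [zero2, ZMod.natCast_eq_natCast_iff'] at h
    obtain ⟨q, hq⟩ : ∃ q, c = 2*q := ⟨c/2, by omega⟩
    subst hq
    have hcc : (2*q)*(2*q) = 4*(q*q) := by ring
    rw [hcc, show (0 : ZMod 4) = ((0:ℕ) : ZMod 4) by norm_num,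
      ZMod.natCast_eq_natCast_iff']
    omega

lemma excl {x : ℕ} (h1 : P1 x) (h2 : P2 x) : False := by
  obtain ⟨k, rfl⟩ := h1
  obtain ⟨a, b, hab, heq⟩ := h2
  exact not_P1_P2 hab heq.symm

lemma cat4 (n : ℕ) : (catalan n : ZMod 4) = if P1 (n+1) then 1 else if P2 (n+1) then 2 else 0 := by
  match n with
  | 0 => rw [if_pos ⟨0, rfl⟩]; simp
  | (m+1) =>
    rcases Nat.even_or_odd m with ⟨l, hl⟩ | ⟨l, hl⟩
    · subst hl
      have h := sum_split (fun k => catalan k * catalan (l+l-k)) (l+l) l (by omega) (cat_symm _)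
      have h2 : l + l + 1 - l = l + 1 := by omega
      rw [h2, Finset.sum_range_succ (fun k => catalan k * catalan (l+l-k)) l] at h
      have hll : l + l - l = l := by omega
      rw [hll] at h
      rw [catalan_succ_range, h]
      have hS2 : ((∑ k ∈ range l, catalan k * catalan (l+l-k))
            + ((∑ k ∈ range l, catalan k * catalan (l+l-k)) + catalan l * catalan l) : ℕ)
          = 2 * (∑ k ∈ range l, catalan k * catalan (l+l-k)) + catalan l * catalan l := by ring
      rw [hS2, Nat.cast_add, lift24 (sum_parity (l+l) l),
        count_lemma (l+l) l (by omega) ?ht2, square4 (catalan l) (cat2 l),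
        if_congr (P1_double l) rfl rfl]
      case ht2 =>
        intro a b hab heq
        have hab2 : (2:ℕ)^a < 2^b := Nat.pow_lt_pow_right one_lt_two hab
        have ha1 : 1 ≤ (2:ℕ)^a := Nat.one_le_two_pow
        omega
      have he : l + l + 1 + 1 = l + l + 2 := by ring
      rw [he]
      by_cases hp1 : P1 (l+l+2)
      · rw [if_pos hp1, if_pos hp1, if_neg (fun hp2 => excl hp1 hp2)]
        norm_num
      · rw [if_neg hp1, if_neg hp1]
        by_cases hp2 : P2 (l+l+2)
        · rw [if_pos hp2, if_pos hp2]
          norm_num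
        · rw [if_neg hp2, if_neg hp2]
          norm_num
    · subst hl
      have h := sum_split (fun k => catalan k * catalan (2*l+1-k)) (2*l+1) (l+1) (by omega)
        (cat_symm _)
      have h2 : 2*l + 1 + 1 - (l+1) = l + 1 := by omega
      rw [h2] at h
      rw [catalan_succ_range, h]
      have hS2 : ((∑ k ∈ range (l+1), catalan k * catalan (2*l+1-k))
            + (∑ k ∈ range (l+1), catalan k * catalan (2*l+1-k)) : ℕ)
          = 2 * (∑ k ∈ range (l+1), catalan k * catalan (2*l+1-k)) := by ring
      rw [hS2, lift24 (sum_parity (2*l+1) (l+1)),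
        count_lemma (2*l+1) (l+1) (by omega) ?ht2]
      case ht2 =>
        intro a b hab heq
        match a, b with
        | 0, b => simp only [pow_zero]; omega
        | (j+1), 0 => omega
        | (j+1), (i+1) =>
          have e1 : (2:ℕ)^(j+1) = 2*2^j := by ring
          have e2 : (2:ℕ)^(i+1) = 2*2^i := by ring
          omega
      have he : 2*l + 1 + 1 + 1 = l + l + 3 := by ring
      rw [he, if_neg not_P1_odd]
      by_cases hp2 : P2 (l+l+3)
      · rw [if_pos hp2, if_pos hp2]
        norm_num
      · rw [if_neg hp2, if_neg hp2]
        norm_num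

lemma PT_imp_P2 {m : ℕ} (h : PT m) : P2 m := by
  obtain ⟨i, k, h3, h2, hki, rfl⟩ := h
  exact ⟨k, i, hki, by ring⟩

lemma four_dvd {k : ℕ} (h : 2 ≤ k) : 4 ∣ 2^k ∧ 4 ≤ 2^k := by
  obtain ⟨j, rfl⟩ : ∃ j, k = j+2 := ⟨k-2, by omega⟩
  have h1 : (2:ℕ)^(j+2) = 4*2^j := by ring
  have h2 := Nat.one_le_two_pow (n := j)
  exact ⟨⟨2^j, by omega⟩, by omega⟩

lemma key4 {m : ℕ} (hm : 5 ≤ m) :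
    (if P1 m then (1:ZMod 4) else if P2 m then 2 else 0)
      = (if P1 m then 1 else 0) + 2*(if PT m then 1 else 0)
        + 2*(if P1 (m-1) then 1 else 0) + 2*(if P1 (m-2) then 1 else 0) := by
  by_cases h1 : P1 m
  · have hPT : ¬ PT m := fun h => excl h1 (PT_imp_P2 h)
    obtain ⟨k, hk⟩ := h1
    have hm1 : ¬ P1 (m-1) := by
      rintro ⟨c, hc⟩
      rcases pow2_cases k with h|h|⟨h,h'⟩ <;> rcases pow2_cases c with g|g|⟨g,g'⟩ <;> omega
    have hm2 : ¬ P1 (m-2) := by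
      rintro ⟨c, hc⟩
      rcases pow2_cases k with h|h|⟨h,h'⟩ <;> rcases pow2_cases c with g|g|⟨g,g'⟩ <;> omega
    rw [if_pos ⟨k, hk⟩, if_pos ⟨k, hk⟩, if_neg hPT, if_neg hm1, if_neg hm2]
    norm_num
  · by_cases h2 : P2 m
    · rw [if_neg h1, if_pos h2]
      obtain ⟨a, b, hab, heq⟩ := h2
      match a with
      | 0 =>
        rw [pow_zero] at heq
        rcases pow2_cases b with h|h|⟨hb4,hb4'⟩
        · omega
        · omega
        · have hPT : ¬ PT m := by
            rintro ⟨i, k, h3, hk2, hki, heq2⟩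
            obtain ⟨hi4, hi4'⟩ := four_dvd (show 2 ≤ i by omega)
            obtain ⟨hk4, hk4'⟩ := four_dvd hk2
            omega
          have hm1 : P1 (m-1) := ⟨b, by omega⟩
          have hm2 : ¬ P1 (m-2) := by
            rintro ⟨c, hc⟩
            rcases pow2_cases c with g|g|⟨g,g'⟩ <;> omega
          rw [if_neg (fun h => h1 h), if_neg hPT, if_pos hm1, if_neg hm2]
          norm_num
      | 1 =>
        rw [pow_one] at heq
        obtain ⟨hb4, hb4'⟩ := four_dvd (show 2 ≤ b by omega)
        have hPT : ¬ PT m := by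
          rintro ⟨i, k, h3, hk2, hki, heq2⟩
          obtain ⟨hi4, hi4'⟩ := four_dvd (show 2 ≤ i by omega)
          obtain ⟨hk4, hk4'⟩ := four_dvd hk2
          omega
        have hm1 : ¬ P1 (m-1) := by
          rintro ⟨c, hc⟩
          rcases pow2_cases c with g|g|⟨g,g'⟩ <;> omega
        have hm2 : P1 (m-2) := ⟨b, by omega⟩
        rw [if_neg (fun h => h1 h), if_neg hPT, if_neg hm1, if_pos hm2]
        norm_num
      | (a'+2) =>
        obtain ⟨ha4, ha4'⟩ := four_dvd (show 2 ≤ a'+2 by omega)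
        obtain ⟨hb4, hb4'⟩ := four_dvd (show 2 ≤ b by omega)
        have hPT : PT m := ⟨b, a'+2, by omega, by omega, hab, by omega⟩
        have hm1 : ¬ P1 (m-1) := by
          rintro ⟨c, hc⟩
          rcases pow2_cases c with g|g|⟨g,g'⟩ <;> omega
        have hm2 : ¬ P1 (m-2) := by
          rintro ⟨c, hc⟩
          rcases pow2_cases c with g|g|⟨g,g'⟩ <;> omega
        rw [if_neg (fun h => h1 h), if_pos hPT, if_neg hm1, if_neg hm2]
        norm_num
    · have hPT : ¬ PT m := fun h => h2 (PT_imp_P2 h)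
      have hm1 : ¬ P1 (m-1) := by
        rintro ⟨c, hc⟩
        match c with
        | 0 => rw [pow_zero] at hc; omega
        | (c'+1) => exact h2 ⟨0, c'+1, by omega, by rw [pow_zero]; omega⟩
      have hm2 : ¬ P1 (m-2) := by
        rintro ⟨c, hc⟩
        match c with
        | 0 => rw [pow_zero] at hc; omega
        | 1 => rw [pow_one] at hc; omega
        | (c'+2) => exact h2 ⟨1, c'+2, by omega, by rw [pow_one]; omega⟩
      rw [if_neg h1, if_neg h1, if_neg h2, if_neg hPT, if_neg hm1, if_neg hm2]
      norm_num

lemma coeff_Sinf (i : ℕ) : PowerSeries.coeff i Sinf = if P1 i then 1 else 0 := by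
  rw [Sinf, PowerSeries.coeff_mk]
  exact if_congr Iff.rfl rfl rfl

lemma coeff_Tinf (i : ℕ) : PowerSeries.coeff i Tinf = if PT i then 1 else 0 := by
  rw [Tinf, PowerSeries.coeff_mk]
  exact if_congr Iff.rfl rfl rfl

lemma coeff_Xphi (j : ℕ) : PowerSeries.coeff (R := ℤ) (j+1) (PowerSeries.X * phi) = catalan j := by
  rw [PowerSeries.coeff_succ_X_mul, phi, PowerSeries.coeff_mk]

lemma coeff_Xphi0 : PowerSeries.coeff 0 (PowerSeries.X * phi) = 0 := by
  simp [PowerSeries.coeff_zero_eq_constantCoeff]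

lemma coeffR (i : ℕ) :
    PowerSeries.coeff i
        (Sinf + 2 * Tinf + 2 * (PowerSeries.X + PowerSeries.X ^ 2) * Sinf +
          2 * (PowerSeries.X ^ 2 + PowerSeries.X ^ 3 + PowerSeries.X ^ 4))
      = (if P1 i then 1 else 0) + 2*(if PT i then 1 else 0)
        + 2*(if 1 ≤ i then (if P1 (i-1) then 1 else 0) else 0)
        + 2*(if 2 ≤ i then (if P1 (i-2) then 1 else 0) else 0)
        + 2*((if i = 2 then 1 else 0) + (if i = 3 then 1 else 0) + (if i = 4 then 1 else 0)) := by
  have hC : (2 : PowerSeries ℤ) = C (R := ℤ) 2 := (map_ofNat (C (R := ℤ)) 2).symm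
  have hdecomp : Sinf + 2 * Tinf + 2 * (X + X ^ 2) * Sinf + 2 * (X ^ 2 + X ^ 3 + X ^ 4)
      = Sinf + C (R := ℤ) 2 * Tinf + C (R := ℤ) 2 * (X ^ 1 * Sinf) + C (R := ℤ) 2 * (X ^ 2 * Sinf)
        + (C (R := ℤ) 2 * X ^ 2 + C (R := ℤ) 2 * X ^ 3 + C (R := ℤ) 2 * X ^ 4) := by
    rw [← hC]; ring
  rw [hdecomp]
  simp only [map_add, coeff_C_mul, coeff_X_pow_mul', coeff_X_pow, coeff_Sinf, coeff_Tinf]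
  ring

lemma notP1_0 : ¬ P1 0 := by rintro ⟨k, hk⟩; rcases pow2_cases k with h|h|⟨h,h'⟩ <;> omega

lemma notP1_3 : ¬ P1 3 := by rintro ⟨k, hk⟩; rcases pow2_cases k with h|h|⟨h,h'⟩ <;> omega

lemma P1_1 : P1 1 := ⟨0, rfl⟩

lemma P1_2 : P1 2 := ⟨1, rfl⟩

lemma P1_4 : P1 4 := ⟨2, rfl⟩

lemma PT_ge {m : ℕ} (h : PT m) : 8 ≤ m := by
  obtain ⟨i, k, h3, hk2, hki, rfl⟩ := h
  obtain ⟨-, hi⟩ := four_dvd (show 2 ≤ i by omega)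
  obtain ⟨-, hk⟩ := four_dvd hk2
  omega

/-- (Equation (4.6).) In `ℤ[[x]]`,
`x·φ(x) ≡ S_∞(x) + 2T_∞(x) + 2(x + x²)·S_∞(x) + 2(x² + x³ + x⁴) (mod 4)`;
in particular `S_∞(x) ≡ x·φ(x) (mod 2)`. -/
theorem stmt17 :
    (∀ i : ℕ, PowerSeries.coeff i (PowerSeries.X * phi) ≡
      PowerSeries.coeff i
        (Sinf + 2 * Tinf + 2 * (PowerSeries.X + PowerSeries.X ^ 2) * Sinf +
          2 * (PowerSeries.X ^ 2 + PowerSeries.X ^ 3 + PowerSeries.X ^ 4)) [ZMOD 4]) ∧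
    (∀ i : ℕ, PowerSeries.coeff i Sinf ≡
      PowerSeries.coeff i (PowerSeries.X * phi) [ZMOD 2]) := by
  constructor
  · intro i
    apply (ZMod.intCast_eq_intCast_iff _ _ 4).mp
    rw [coeffR]
    have hPT0 : ∀ m : ℕ, m < 8 → ¬ PT m := fun m hm h => by have := PT_ge h; omega
    match i with
    | 0 =>
      rw [coeff_Xphi0, if_neg notP1_0, if_neg (hPT0 0 (by omega)), if_neg (by omega),
        if_neg (by omega), if_neg (by omega), if_neg (by omega), if_neg (by omega)]
      norm_num
    | 1 =>
      rw [coeff_Xphi 0, if_pos P1_1, if_neg (hPT0 1 (by omega)), if_pos (by omega),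
        if_neg notP1_0, if_neg (by omega), if_neg (by omega), if_neg (by omega),
        if_neg (by omega)]
      norm_num
    | 2 =>
      rw [coeff_Xphi 1, if_pos P1_2, if_neg (hPT0 2 (by omega)), if_pos (by omega),
        if_pos P1_1, if_pos (by omega), if_neg notP1_0, if_pos (by omega : (2:ℕ) = 2),
        if_neg (by omega), if_neg (by omega)]
      norm_num [catalan_one]
      decide
    | 3 =>
      rw [coeff_Xphi 2, catalan_two, if_neg notP1_3, if_neg (hPT0 3 (by omega)),
        if_pos (by omega), if_pos P1_2, if_pos (by omega), if_pos P1_1,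
        if_neg (by omega), if_pos (by omega : (3:ℕ) = 3), if_neg (by omega)]
      decide
    | 4 =>
      rw [coeff_Xphi 3, catalan_three, if_pos P1_4, if_neg (hPT0 4 (by omega)),
        if_pos (by omega), if_neg notP1_3, if_pos (by omega), if_pos P1_2,
        if_neg (by omega), if_neg (by omega), if_pos (by omega : (4:ℕ) = 4)]
      decide
    | (j+5) =>
      rw [show j+5 = j+4+1 from rfl, coeff_Xphi (j+4)]
      rw [if_pos (show 1 ≤ j+4+1 by omega), if_pos (show 2 ≤ j+4+1 by omega),
        if_neg (show ¬ j+4+1 = 2 by omega), if_neg (show ¬ j+4+1 = 3 by omega),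
        if_neg (show ¬ j+4+1 = 4 by omega)]
      have e1 : j+4+1-1 = j+4 := by omega
      have e2 : j+4+1-2 = j+3 := by omega
      rw [e1, e2]
      have hL : ((catalan (j+4) : ℤ) : ZMod 4) = (catalan (j+4) : ZMod 4) := by push_cast; rfl
      rw [hL, cat4 (j+4), key4 (show 5 ≤ j+4+1 by omega), e1, e2]
      simp only [Int.cast_add, Int.cast_mul, Int.cast_ofNat,
        apply_ite (fun z : ℤ => (z : ZMod 4)), Int.cast_one, Int.cast_zero]
      ring
  · intro i
    apply (ZMod.intCast_eq_intCast_iff _ _ 2).mp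
    rw [coeff_Sinf]
    match i with
    | 0 =>
      rw [coeff_Xphi0, if_neg notP1_0]
    | (j+1) =>
      rw [coeff_Xphi j]
      have hL : ((catalan j : ℤ) : ZMod 2) = (catalan j : ZMod 2) := by push_cast; rfl
      rw [hL, cat2 j]
      simp only [apply_ite (fun z : ℤ => (z : ZMod 2)), Int.cast_one, Int.cast_zero]
end
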